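/- arXiv:2212.07474 — 7 statements merged into one kernel-verified Lean document; each statement's English description precedes it below -/
import Mathlib

section
/- Let n ≥ 2 be an integer and u : [a,b] → ℝ be (n+1)-times continuously differentiable with (-1)^k u^(k)(x) ≤ 0 on [a,b] for all k = 1,…,n+1, and u^(k)(b) = 0 for all k = 1,…,n-1. Then (n-1)·u'(x) + u''(x)·(b-x) ≤ 0 for all x in [a,b]. -/
theorem aux_stmt_1 (n : ℕ) (a b : ℝ) (u : ℝ → ℝ)
    (hn : 2 ≤ n) (hab : a < b)
    (hu : ContDiff ℝ (n + 1) u)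
    (hsign : ∀ k, 1 ≤ k → k ≤ n + 1 → ∀ x ∈ Set.Icc a b,
      (-1 : ℝ) ^ k * iteratedDeriv k u x ≤ 0)
    (hvanish : ∀ k, 1 ≤ k → k ≤ n - 1 → iteratedDeriv k u b = 0)
    (j : ℕ) (hj1 : 1 ≤ j) (hjn : j ≤ n) :
    ∀ x ∈ Set.Icc a b,
      (-1 : ℝ) ^ (j - 1) *
        (((n : ℝ) - j) * iteratedDeriv j u x + iteratedDeriv (j + 1) u x * (b - x)) ≤ 0 := by
  intro x hx
  rcases eq_or_lt_of_le hjn with rfl | hlt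
  · -- base case j = n
    have h := hsign (j + 1) (by omega) (by omega) x hx
    have hbx : 0 ≤ b - x := by linarith [hx.2]
    have hsgn : (-1 : ℝ) ^ (j - 1) = (-1 : ℝ) ^ (j + 1) := by
      have : j + 1 = (j - 1) + 2 := by omega
      rw [this, pow_add]
      ring
    have : ((j : ℝ) - j) = 0 := by ring
    rw [this, zero_mul, zero_add, hsgn, mul_comm ((-1:ℝ)^(j+1) ) _, mul_assoc]
    calc iteratedDeriv (j + 1) u x * ((b - x) * (-1 : ℝ) ^ (j + 1))
        = (b - x) * ((-1 : ℝ) ^ (j + 1) * iteratedDeriv (j + 1) u x) := by ring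
      _ ≤ 0 := mul_nonpos_of_nonneg_of_nonpos hbx h
  · -- inductive step: j < n, use result at j + 1
    have IH := aux_stmt_1 n a b u hn hab hu hsign hvanish (j + 1) (by omega) (by omega)
    set G : ℝ → ℝ := fun y => (-1 : ℝ) ^ (j - 1) *
        (((n : ℝ) - j) * iteratedDeriv j u y + iteratedDeriv (j + 1) u y * (b - y)) with hG
    have hdiff : ∀ m : ℕ, m ≤ n → Differentiable ℝ (iteratedDeriv m u) := by
      intro m hm
      exact hu.differentiable_iteratedDeriv m (by exact_mod_cast Nat.lt_succ_of_le hm)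
    have hderiv : ∀ m : ℕ, m ≤ n → ∀ y : ℝ,
        HasDerivAt (iteratedDeriv m u) (iteratedDeriv (m + 1) u y) y := by
      intro m hm y
      rw [iteratedDeriv_succ]
      exact ((hdiff m hm) y).hasDerivAt
    have hGd : ∀ y : ℝ, HasDerivAt G ((-1 : ℝ) ^ (j - 1) *
        (((n : ℝ) - (j+1)) * iteratedDeriv (j+1) u y + iteratedDeriv (j + 2) u y * (b - y))) y := by
      intro y
      have h1 := hderiv j (by omega) y
      have h2 := hderiv (j + 1) (by omega) y
      have h3 : HasDerivAt (fun z : ℝ => b - z) (-1 : ℝ) y := by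
        simpa using ((hasDerivAt_id y).const_sub b)
      have := ((h1.const_mul ((n : ℝ) - j)).add (h2.mul h3)).const_mul ((-1 : ℝ) ^ (j - 1))
      refine this.congr_deriv ?_
      ring
    have hmono : MonotoneOn G (Set.Icc a b) := by
      have hGdiff : Differentiable ℝ G := fun y => (hGd y).differentiableAt
      apply monotoneOn_of_deriv_nonneg (convex_Icc a b)
      · exact hGdiff.continuous.continuousOn
      · exact hGdiff.differentiableOn
      · intro y hy
        rw [interior_Icc] at hy
        rw [(hGd y).deriv]
        have := IH y (Set.mem_Icc.mpr ⟨le_of_lt hy.1, le_of_lt hy.2⟩)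
        have hsgn : (-1 : ℝ) ^ ((j + 1) - 1) = -(-1 : ℝ) ^ (j - 1) := by
          have : (j + 1) - 1 = (j - 1) + 1 := by omega
          rw [this, pow_succ]
          ring
        rw [hsgn] at this
        push_cast at this ⊢
        nlinarith [this]
    have hGb : G b = 0 := by
      have hv : iteratedDeriv j u b = 0 := hvanish j hj1 (by omega)
      simp [hG, hv]
    have hfin := hmono hx (Set.mem_Icc.mpr ⟨le_of_lt hab, le_refl b⟩) hx.2
    rw [hGb] at hfin
    exact hfin
termination_by n - j

theorem stmt_1 (n : ℕ) (a b : ℝ) (u : ℝ → ℝ)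
    (hn : 2 ≤ n) (hab : a < b)
    (hu : ContDiff ℝ (n + 1) u)
    (hsign : ∀ k, 1 ≤ k → k ≤ n + 1 → ∀ x ∈ Set.Icc a b,
      (-1 : ℝ) ^ k * iteratedDeriv k u x ≤ 0)
    (hvanish : ∀ k, 1 ≤ k → k ≤ n - 1 → iteratedDeriv k u b = 0) :
    ∀ x ∈ Set.Icc a b,
      ((n : ℝ) - 1) * deriv u x + iteratedDeriv 2 u x * (b - x) ≤ 0 := by
  intro x hx
  have h := aux_stmt_1 n a b u hn hab hu hsign hvanish 1 le_rfl (by omega) x hx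
  simpa [iteratedDeriv_one] using h
end

section
/- Let n ≥ 2 and let u : [a,b] → ℝ be (n+1)-times continuously differentiable with (-1)^k u^(k)(x) ≤ 0 on [a,b] for k = 1,…,n+1. If (n-1)·u'(x) + u''(x)·(b-x) ≤ 0 for all x in [a,b], then u^(k)(b) = 0 for all k = 1,…,n-1. -/
theorem stmt_2 (n : ℕ) (a b : ℝ) (u : ℝ → ℝ)
    (hn : 2 ≤ n) (hab : a < b)
    (hu : ContDiff ℝ (n + 1) u)
    (hsign : ∀ k, 1 ≤ k → k ≤ n + 1 → ∀ x ∈ Set.Icc a b,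
      (-1 : ℝ) ^ k * iteratedDeriv k u x ≤ 0)
    (hAP : ∀ x ∈ Set.Icc a b,
      ((n : ℝ) - 1) * deriv u x + iteratedDeriv 2 u x * (b - x) ≤ 0) :
    ∀ k, 1 ≤ k → k ≤ n - 1 → iteratedDeriv k u b = 0 := by
  simp only [← iteratedDeriv_one] at hAP
  -- basic differentiability facts
  have hdiffm : ∀ m : ℕ, m ≤ n → Differentiable ℝ (iteratedDeriv m u) := by
    intro m hm
    exact hu.differentiable_iteratedDeriv m (by exact_mod_cast Nat.lt_succ_of_le hm)
  have hconts : ∀ m : ℕ, m ≤ n + 1 → Continuous (iteratedDeriv m u) := by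
    intro m hm
    exact hu.continuous_iteratedDeriv m (by exact_mod_cast hm)
  have hderivD : ∀ m : ℕ, m ≤ n → ∀ x : ℝ,
      HasDerivAt (iteratedDeriv m u) (iteratedDeriv (m + 1) u x) x := by
    intro m hm x
    rw [iteratedDeriv_succ]
    exact ((hdiffm m hm) x).hasDerivAt
  -- positivity of the first derivative
  have hD1 : ∀ x ∈ Set.Icc a b, 0 ≤ iteratedDeriv 1 u x := by
    intro x hx
    have h := hsign 1 le_rfl (by omega) x hx
    simpa using h
  -- Step 2: the upper bound u' x ≤ C * (b - x)^(n-1) on [a, b)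
  set C : ℝ := iteratedDeriv 1 u a / (b - a) ^ (n - 1) with hCdef
  have hCnonneg : 0 ≤ C :=
    div_nonneg (hD1 a ⟨le_rfl, hab.le⟩) (pow_nonneg (sub_nonneg.2 hab.le) _)
  set G : ℝ → ℝ := fun x => iteratedDeriv 1 u x / (b - x) ^ (n - 1) with hGdef
  have hGderiv : ∀ x ∈ Set.Ioo a b,
      HasDerivAt G ((iteratedDeriv 2 u x * (b - x) ^ (n - 1) -
        iteratedDeriv 1 u x * ((↑(n - 1) : ℝ) * (b - x) ^ (n - 1 - 1) * (-1))) /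
        ((b - x) ^ (n - 1)) ^ 2) x := by
    intro x hx
    have h1 : HasDerivAt (fun z : ℝ => b - z) (-1) x := (hasDerivAt_id x).const_sub b
    have h2 := h1.pow (n - 1)
    exact (hderivD 1 (by omega) x).div h2 (pow_ne_zero _ (sub_ne_zero.2 hx.2.ne'))
  have hGanti : AntitoneOn G (Set.Ico a b) := by
    apply antitoneOn_of_deriv_nonpos (convex_Ico a b)
    · apply ContinuousOn.div ((hconts 1 (by omega)).continuousOn)
      · exact (continuous_const.sub continuous_id).pow (n - 1) |>.continuousOn
      · intro x hx
        exact pow_ne_zero _ (sub_ne_zero.2 hx.2.ne')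
    · rw [interior_Ico]
      intro x hx
      exact (hGderiv x hx).differentiableAt.differentiableWithinAt
    · rw [interior_Ico]
      intro x hx
      rw [(hGderiv x hx).deriv]
      apply div_nonpos_of_nonpos_of_nonneg _ (sq_nonneg _)
      have hcast : ((n - 1 : ℕ) : ℝ) = (n : ℝ) - 1 := by
        rw [Nat.cast_sub (by omega)]; norm_num
      have hidx : n - 1 - 1 = n - 2 := by omega
      have hpow : (b - x) ^ (n - 1) = (b - x) ^ (n - 2) * (b - x) := by
        rw [← pow_succ]; congr 1; omega
      have hAPx := hAP x ⟨hx.1.le, hx.2.le⟩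
      have heq : iteratedDeriv 2 u x * (b - x) ^ (n - 1) -
          iteratedDeriv 1 u x * ((↑(n - 1) : ℝ) * (b - x) ^ (n - 1 - 1) * (-1)) =
          (b - x) ^ (n - 2) *
            (((n : ℝ) - 1) * iteratedDeriv 1 u x + iteratedDeriv 2 u x * (b - x)) := by
        rw [hcast, hidx, hpow]; ring
      rw [heq]
      exact mul_nonpos_of_nonneg_of_nonpos (pow_nonneg (by linarith [hx.2] : (0:ℝ) ≤ b - x) _) hAPx
  have hbound : ∀ x ∈ Set.Ico a b, iteratedDeriv 1 u x ≤ C * (b - x) ^ (n - 1) := by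
    intro x hx
    have h := hGanti (Set.left_mem_Ico.2 hab) hx hx.1
    have hpos : (0:ℝ) < (b - x) ^ (n - 1) := pow_pos (sub_pos.2 hx.2) _
    calc iteratedDeriv 1 u x = G x * (b - x) ^ (n - 1) := by
          rw [hGdef]; field_simp
      _ ≤ G a * (b - x) ^ (n - 1) := mul_le_mul_of_nonneg_right h hpos.le
      _ = C * (b - x) ^ (n - 1) := rfl
  -- Step 3: strong induction
  intro k
  induction k using Nat.strong_induction_on with
  | _ k IH =>
    intro hk1 hk2
    have hIH : ∀ j, 1 ≤ j → j < k → iteratedDeriv j u b = 0 := by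
      intro j hj1 hj2
      exact IH j hj2 hj1 (by omega)
    by_contra hc
    -- sign at b
    have hsb := hsign k hk1 (by omega) b ⟨hab.le, le_rfl⟩
    have h1 : (-1:ℝ) ^ k * iteratedDeriv k u b < 0 := by
      rcases hsb.lt_or_eq with h | h
      · exact h
      · exfalso; apply hc
        rcases mul_eq_zero.1 h with h' | h'
        · exact absurd h' (pow_ne_zero k (by norm_num))
        · exact h'
    have hcpos : 0 < (-1:ℝ) ^ (k + 1) * iteratedDeriv k u b := by
      have heq : (-1:ℝ) ^ (k + 1) * iteratedDeriv k u b =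
          -((-1:ℝ) ^ k * iteratedDeriv k u b) := by rw [pow_succ]; ring
      rw [heq]; exact neg_pos.2 h1
    set m' : ℝ := ((-1:ℝ) ^ (k + 1) * iteratedDeriv k u b) / 2 with hm'def
    have hm'pos : 0 < m' := by positivity
    -- find δ
    have hSopen : IsOpen {x : ℝ | m' < (-1:ℝ) ^ (k + 1) * iteratedDeriv k u x} :=
      isOpen_lt continuous_const (continuous_const.mul (hconts k (by omega)))
    have hbS : b ∈ {x : ℝ | m' < (-1:ℝ) ^ (k + 1) * iteratedDeriv k u x} := by
      simp only [Set.mem_setOf_eq, hm'def]; linarith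
    obtain ⟨ε, hε, hball⟩ := Metric.mem_nhds_iff.1 (hSopen.mem_nhds hbS)
    set δ : ℝ := min (ε / 2) (b - a) with hδdef
    have hδpos : 0 < δ := lt_min (by linarith) (by linarith)
    have hδba : δ ≤ b - a := min_le_right _ _
    have hδlow : ∀ x ∈ Set.Icc (b - δ) b, m' < (-1:ℝ) ^ (k + 1) * iteratedDeriv k u x := by
      intro x hx
      apply hball
      rw [Metric.mem_ball, Real.dist_eq, abs_lt]
      have hδε : δ ≤ ε / 2 := min_le_left _ _
      constructor <;> [linarith [hx.1]; linarith [hx.2]]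
    -- the inner induction
    have hQ : ∀ j, j ≤ k - 1 → ∀ x ∈ Set.Icc (b - δ) b,
        m' * (b - x) ^ j / (Nat.factorial j) ≤ (-1:ℝ) ^ (k + 1 + j) * iteratedDeriv (k - j) u x := by
      intro j
      induction j with
      | zero =>
        intro _ x hx
        simpa using (hδlow x hx).le
      | succ j IHj =>
        intro hj x hx
        have hj' : j ≤ k - 1 := by omega
        have hkj1 : 1 ≤ k - (j + 1) := by omega
        have hidx : k - (j + 1) + 1 = k - j := by omega
        set F : ℝ → ℝ := fun y => (-1:ℝ) ^ (k + 1 + (j + 1)) * iteratedDeriv (k - (j + 1)) u y -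
          m' * (b - y) ^ (j + 1) / (Nat.factorial (j + 1)) with hFdef
        have hFb : F b = 0 := by
          simp [hFdef, hIH (k - (j + 1)) hkj1 (by omega), sub_self, zero_pow (Nat.succ_ne_zero j)]
        have hd : ∀ y : ℝ, HasDerivAt (iteratedDeriv (k - (j + 1)) u)
            (iteratedDeriv (k - j) u y) y := by
          intro y
          have := hderivD (k - (j + 1)) (by omega) y
          rwa [hidx] at this
        have hpowd : ∀ y : ℝ, HasDerivAt (fun z : ℝ => (b - z) ^ (j + 1))
            (-((j + 1 : ℝ) * (b - y) ^ j)) y := by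
          intro y
          have h1 : HasDerivAt (fun z : ℝ => b - z) (-1) y := (hasDerivAt_id y).const_sub b
          have h2 := h1.pow (j + 1)
          have h3 : HasDerivAt (fun z : ℝ => (b - z) ^ (j + 1))
              ((↑(j + 1):ℝ) * (b - y) ^ (j + 1 - 1) * -1) y := h2
          rw [Nat.add_sub_cancel] at h3
          convert h3 using 1
          push_cast
          ring
        have hFd : ∀ y : ℝ, HasDerivAt F
            ((-1:ℝ) ^ (k + 1 + (j + 1)) * iteratedDeriv (k - j) u y +
              m' * ((j + 1 : ℝ) * (b - y) ^ j) / (Nat.factorial (j + 1))) y := by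
          intro y
          have h := ((hd y).const_mul ((-1:ℝ) ^ (k + 1 + (j + 1)))).sub
            (((hpowd y).const_mul m').div_const (Nat.factorial (j + 1)))
          have h' : HasDerivAt F ((-1:ℝ) ^ (k + 1 + (j + 1)) * iteratedDeriv (k - j) u y -
              m' * -((j + 1 : ℝ) * (b - y) ^ j) / (Nat.factorial (j + 1))) y := h
          convert h' using 1
          ring
        have hderivnp : ∀ y ∈ Set.Ioo (b - δ) b,
            deriv F y ≤ 0 := by
          intro y hy
          rw [(hFd y).deriv]
          have hIH' := IHj hj' y ⟨hy.1.le, hy.2.le⟩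
          have hsgn : (-1:ℝ) ^ (k + 1 + (j + 1)) = -(-1:ℝ) ^ (k + 1 + j) := by
            rw [show k + 1 + (j + 1) = (k + 1 + j) + 1 by omega, pow_succ]; ring
          have hfact : ((Nat.factorial (j + 1) : ℝ)) = (j + 1 : ℝ) * (Nat.factorial j : ℝ) := by
            rw [Nat.factorial_succ]; push_cast; ring
          have hfj : (0:ℝ) < (Nat.factorial j : ℝ) := by
            exact_mod_cast Nat.factorial_pos j
          have heq2 : m' * ((j + 1 : ℝ) * (b - y) ^ j) / (Nat.factorial (j + 1) : ℝ) =
              m' * (b - y) ^ j / (Nat.factorial j : ℝ) := by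
            rw [hfact]
            field_simp
          rw [hsgn, heq2]
          linarith
        have hFanti : AntitoneOn F (Set.Icc (b - δ) b) := by
          apply antitoneOn_of_deriv_nonpos (convex_Icc _ _)
          · exact (Differentiable.continuous (fun y => (hFd y).differentiableAt)).continuousOn
          · intro y _
            exact (hFd y).differentiableAt.differentiableWithinAt
          · rw [interior_Icc]
            exact hderivnp
        have hF0 : 0 ≤ F x := by
          have := hFanti hx (Set.right_mem_Icc.2 (by linarith)) hx.2
          rw [hFb] at this
          exact this
        simp only [hFdef] at hF0
        linarith
    -- conclude: lower bound for u' near b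
    have hQk := hQ (k - 1) le_rfl
    have hsgn1 : (-1:ℝ) ^ (k + 1 + (k - 1)) = 1 := by
      rw [show k + 1 + (k - 1) = 2 * k by omega, pow_mul]
      norm_num
    have hkk : k - (k - 1) = 1 := by omega
    have hlow : ∀ x ∈ Set.Icc (b - δ) b,
        m' * (b - x) ^ (k - 1) / (Nat.factorial (k - 1)) ≤ iteratedDeriv 1 u x := by
      intro x hx
      have := hQk x hx
      rwa [hsgn1, hkk, one_mul] at this
    -- choose the point
    set K : ℝ := (Nat.factorial (k - 1) : ℝ) with hKdef
    have hK : (0:ℝ) < K := by rw [hKdef]; exact_mod_cast Nat.factorial_pos (k - 1)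
    set t : ℝ := min δ (min 1 (m' / (2 * K * (C + 1)))) with htdef
    have ht0 : 0 < t := by
      apply lt_min hδpos
      apply lt_min one_pos
      positivity
    have htδ : t ≤ δ := min_le_left _ _
    have ht1 : t ≤ 1 := (min_le_right _ _).trans (min_le_left _ _)
    have ht2 : t ≤ m' / (2 * K * (C + 1)) := (min_le_right _ _).trans (min_le_right _ _)
    set x : ℝ := b - t with hxdef
    have hxIcc : x ∈ Set.Icc (b - δ) b := ⟨by simp [hxdef]; linarith, by simp [hxdef]; linarith⟩
    have hxIco : x ∈ Set.Ico a b := ⟨by simp [hxdef]; linarith, by simp [hxdef]; linarith⟩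
    have hbx : b - x = t := by rw [hxdef]; ring
    have h1' := hlow x hxIcc
    have h2' := hbound x hxIco
    rw [hbx] at h1' h2'
    have htp : (0:ℝ) < t ^ (k - 1) := pow_pos ht0 _
    have hpowsplit : t ^ (n - 1) = t ^ (k - 1) * t ^ (n - k) := by
      rw [← pow_add]; congr 1; omega
    have hnk : t ^ (n - k) ≤ t := pow_le_of_le_one ht0.le ht1 (by omega)
    have hchain : m' * t ^ (k - 1) / K ≤ C * t * t ^ (k - 1) := by
      calc m' * t ^ (k - 1) / K ≤ iteratedDeriv 1 u x := h1'
        _ ≤ C * t ^ (n - 1) := h2'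
        _ = C * (t ^ (k - 1) * t ^ (n - k)) := by rw [hpowsplit]
        _ ≤ C * (t ^ (k - 1) * t) := by
            apply mul_le_mul_of_nonneg_left _ hCnonneg
            exact mul_le_mul_of_nonneg_left hnk htp.le
        _ = C * t * t ^ (k - 1) := by ring
    have hB : m' ≤ C * t * K := by
      have h3 : m' * t ^ (k - 1) ≤ C * t * K * t ^ (k - 1) := by
        rw [div_le_iff₀ hK] at hchain
        linarith [hchain]
      exact le_of_mul_le_mul_right (by linarith) htp
    have ht2' : t * (2 * K * (C + 1)) ≤ m' := by
      rw [le_div_iff₀ (by positivity)] at ht2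
      linarith
    have hfinal : t * (2 * K * (C + 1)) ≤ C * t * K := le_trans ht2' hB
    have hpos2 : 0 < t * K := mul_pos ht0 hK
    have e1 : t * (2 * K * (C + 1)) = 2 * (C * t * K) + 2 * (t * K) := by ring
    linarith [mul_nonneg hCnonneg hpos2.le, mul_nonneg hCnonneg (mul_pos ht0 hK).le]
end

section
/- For any a < b and integer n ≥ 2, there exists a twice continuously differentiable function g : [a,b] → ℝ with g' ≥ 0, g'' ≤ 0 and (n-1)·g'(x) + g''(x)·(b-x) ≤ 0 on [a,b], such that the function x ↦ (g(b) - g(x))^(1/n) is not convex on [a,b]. Concretely, with a = 0 and γ = (n+1)/(2b(n+2)), the function g(x) = -(b-x)^(n+1)·(1 - γ(b-x)) has these properties. -/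
open Real Set

noncomputable def gAux (b γ : ℝ) (n : ℕ) : ℝ → ℝ :=
  fun x => -(b - x) ^ (n + 1) + γ * (b - x) ^ (n + 2)

noncomputable def uAux (b γ : ℝ) (n : ℕ) : ℝ → ℝ :=
  fun x => (b - x) ^ (n + 1) - γ * (b - x) ^ (n + 2)

noncomputable def u1Aux (b γ : ℝ) (n : ℕ) : ℝ → ℝ :=
  fun x => -(((n : ℝ) + 1) * (b - x) ^ n) + γ * ((n : ℝ) + 2) * (b - x) ^ (n + 1)

noncomputable def u2Aux (b γ : ℝ) (n : ℕ) : ℝ → ℝ :=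
  fun x => (n : ℝ) * ((n : ℝ) + 1) * (b - x) ^ (n - 1)
    - γ * ((n : ℝ) + 1) * ((n : ℝ) + 2) * (b - x) ^ n

noncomputable def QAux (b γ : ℝ) (n : ℕ) : ℝ → ℝ :=
  fun x => (n : ℝ) * uAux b γ n x * u2Aux b γ n x - ((n : ℝ) - 1) * (u1Aux b γ n x) ^ 2

lemma uAux_hasDerivAt (b γ : ℝ) (n : ℕ) (x : ℝ) :
    HasDerivAt (uAux b γ n) (u1Aux b γ n x) x := by
  have hb : HasDerivAt (fun y : ℝ => b - y) (-1) x := (hasDerivAt_id x).const_sub b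
  have h := (hb.pow (n + 1)).sub ((hb.pow (n + 2)).const_mul γ)
  refine h.congr_deriv ?_
  simp [u1Aux]
  ring

lemma gAux_hasDerivAt (b γ : ℝ) (n : ℕ) (x : ℝ) :
    HasDerivAt (gAux b γ n) (-(u1Aux b γ n x)) x := by
  have h := ((uAux_hasDerivAt b γ n x).neg)
  refine h.congr_of_eventuallyEq (Filter.Eventually.of_forall fun y => ?_)
  simp [gAux, uAux]
  ring

lemma u1Aux_hasDerivAt (b γ : ℝ) {n : ℕ} (hn : 1 ≤ n) (x : ℝ) :
    HasDerivAt (u1Aux b γ n) (u2Aux b γ n x) x := by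
  have hb : HasDerivAt (fun y : ℝ => b - y) (-1) x := (hasDerivAt_id x).const_sub b
  have h := ((hb.pow n).const_mul ((n : ℝ) + 1)).neg.add
    (((hb.pow (n + 1)).const_mul (γ * ((n : ℝ) + 2))))
  refine h.congr_deriv ?_
  simp [u2Aux]
  obtain ⟨m, rfl⟩ : ∃ m, n = m + 1 := ⟨n - 1, by omega⟩
  push_cast
  ring

set_option maxHeartbeats 2000000 in
theorem stmt_3 (n : ℕ) (a b : ℝ) (hn : 2 ≤ n) (hab : a < b) :
    ∃ g : ℝ → ℝ, ContDiff ℝ 2 g ∧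
      (∀ x ∈ Set.Icc a b, 0 ≤ deriv g x) ∧
      (∀ x ∈ Set.Icc a b, deriv (deriv g) x ≤ 0) ∧
      (∀ x ∈ Set.Icc a b,
        ((n : ℝ) - 1) * deriv g x + deriv (deriv g) x * (b - x) ≤ 0) ∧
      ¬ ConvexOn ℝ (Set.Icc a b) (fun x => (g b - g x) ^ ((1 : ℝ) / n)) := by
  have hc : (0 : ℝ) < b - a := by linarith
  have hn1 : (1:ℝ) ≤ (n:ℝ) := by exact_mod_cast Nat.one_le_of_lt hn
  have hn2 : (2:ℝ) ≤ (n:ℝ) := by exact_mod_cast hn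
  obtain ⟨γ, hγdef⟩ : ∃ γ : ℝ, γ = ((n : ℝ) + 1) / (2 * (b - a) * ((n : ℝ) + 2)) :=
    ⟨_, rfl⟩
  have hKey : 2 * (b - a) * ((n : ℝ) + 2) * γ = (n : ℝ) + 1 := by
    rw [hγdef]; field_simp
  have hγpos : 0 < γ := by rw [hγdef]; positivity
  obtain ⟨g, hg⟩ : ∃ g : ℝ → ℝ, g = gAux b γ n := ⟨_, rfl⟩
  have hderiv : deriv g = fun x => -(u1Aux b γ n x) := by
    rw [hg]; exact funext fun x => (gAux_hasDerivAt b γ n x).deriv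
  have hderiv2 : deriv (deriv g) = fun x => -(u2Aux b γ n x) := by
    rw [hderiv]
    exact funext fun x => ((u1Aux_hasDerivAt b γ (by omega) x).neg).deriv
  refine ⟨g, ?_, ?_, ?_, ?_, ?_⟩
  · -- ContDiff
    rw [hg]
    unfold gAux
    exact (((contDiff_const.sub contDiff_id).pow _).neg).add
      (contDiff_const.mul ((contDiff_const.sub contDiff_id).pow _))
  · -- deriv g ≥ 0
    intro x hx
    rw [hderiv]
    simp only [u1Aux]
    obtain ⟨h1, h2⟩ := hx
    have ht0 : 0 ≤ b - x := by linarith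
    have htc : b - x ≤ b - a := by linarith
    have hγn2 : 0 ≤ γ * ((n:ℝ)+2) := by positivity
    have hb1 : γ * ((n:ℝ)+2) * (b - x) ≤ ((n:ℝ)+1)/2 := by
      nlinarith [mul_le_mul_of_nonneg_left htc hγn2]
    have hfac : 0 ≤ ((n:ℝ) + 1) - γ * ((n:ℝ) + 2) * (b - x) := by linarith
    rw [pow_succ]
    nlinarith [mul_nonneg (pow_nonneg ht0 n) hfac]
  · -- deriv2 g ≤ 0
    intro x hx
    rw [hderiv2]
    simp only [u2Aux]
    obtain ⟨h1, h2⟩ := hx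
    have ht0 : 0 ≤ b - x := by linarith
    have htc : b - x ≤ b - a := by linarith
    have hγn2 : 0 ≤ γ * ((n:ℝ)+2) := by positivity
    have hb1 : γ * ((n:ℝ)+2) * (b - x) ≤ ((n:ℝ)+1)/2 := by
      nlinarith [mul_le_mul_of_nonneg_left htc hγn2]
    have hfac : 0 ≤ (n:ℝ) * ((n:ℝ)+1) - γ * ((n:ℝ)+1) * ((n:ℝ)+2) * (b - x) := by
      nlinarith [mul_le_mul_of_nonneg_left hb1 (by linarith : (0:ℝ) ≤ (n:ℝ)+1)]
    have e1 : (b - x) ^ n = (b - x)^(n-1) * (b - x) := by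
      conv_lhs => rw [show n = (n-1)+1 by omega]
      rw [pow_succ]
    rw [e1]
    nlinarith [mul_nonneg (pow_nonneg ht0 (n-1)) hfac]
  · -- combined inequality
    intro x hx
    rw [hderiv2, hderiv]
    simp only [u1Aux, u2Aux]
    obtain ⟨h1, h2⟩ := hx
    have ht0 : 0 ≤ b - x := by linarith
    have htc : b - x ≤ b - a := by linarith
    have hγn2 : 0 ≤ γ * ((n:ℝ)+2) := by positivity
    have hb1 : γ * ((n:ℝ)+2) * (b - x) ≤ ((n:ℝ)+1)/2 := by
      nlinarith [mul_le_mul_of_nonneg_left htc hγn2]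
    have hfac : 0 ≤ ((n:ℝ)+1) - 2 * γ * ((n:ℝ)+2) * (b - x) := by linarith
    have e1 : (b - x) ^ n = (b - x)^(n-1) * (b - x) := by
      conv_lhs => rw [show n = (n-1)+1 by omega]
      rw [pow_succ]
    have e2 : (b - x) ^ (n+1) = (b - x)^(n-1) * (b - x)^2 := by
      rw [show n+1 = (n-1)+2 by omega, pow_add]
    rw [e1, e2]
    nlinarith [mul_nonneg (mul_nonneg (pow_nonneg ht0 (n-1)) ht0) hfac]
  · -- non-convexity
    obtain ⟨p, hp⟩ : ∃ p : ℝ, p = (1:ℝ)/(n:ℝ) := ⟨_, rfl⟩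
    rw [show ((1:ℝ)/(n:ℝ)) = p from hp.symm]
    have hnpos : (0:ℝ) < (n:ℝ) := by linarith
    have hn0 : (n:ℝ) ≠ 0 := ne_of_gt hnpos
    have hf_eq : (fun x => (g b - g x) ^ p) = fun x => uAux b γ n x ^ p := by
      funext x
      have hgb : g b = 0 := by simp [hg, gAux]
      have h2 : g b - g x = uAux b γ n x := by
        rw [hgb, hg]; simp [gAux, uAux]; ring
      rw [h2]
    rw [hf_eq]
    obtain ⟨f, hf⟩ : ∃ f : ℝ → ℝ, f = fun x => uAux b γ n x ^ p := ⟨_, rfl⟩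
    rw [← hf]
    have hγc : γ * (b - a) * (2 * ((n:ℝ)+2)) = (n:ℝ)+1 := by linarith [hKey]
    have hγc1 : γ * (b - a) < 1 := by nlinarith
    have hua : 0 < uAux b γ n a := by
      simp only [uAux]
      have e1 : (b - a)^(n+2) = (b-a)^(n+1)*(b-a) := by
        rw [show n+2 = (n+1)+1 by omega, pow_succ]
      nlinarith [e1, mul_pos (pow_pos hc (n+1))
        (show (0:ℝ) < 1 - γ*(b-a) by linarith)]
    have hQa : QAux b γ n a < 0 := by
      obtain ⟨m, rfl⟩ : ∃ m, n = m + 2 := ⟨n - 2, by omega⟩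
      have key : QAux b γ (m+2) a = ((b-a)^(m+1))^2 * (b-a)^2 *
          (((m:ℝ)+2) * (1 - γ*(b-a)) * (((m:ℝ)+2)*((m:ℝ)+3) - ((m:ℝ)+3)*((m:ℝ)+4)*(γ*(b-a)))
            - ((m:ℝ)+1) * (((m:ℝ)+3) - ((m:ℝ)+4)*(γ*(b-a)))^2) := by
        simp only [QAux, uAux, u1Aux, u2Aux]
        rw [show m+2-1 = m+1 by omega]
        push_cast
        ring
      have hm4 : ((m:ℝ)+4) ≠ 0 := by positivity
      have hE2 : γ*(b-a) = ((m:ℝ)+3)/(2*((m:ℝ)+4)) := by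
        rw [hγdef]
        push_cast
        field_simp
        ring
      have hBval : (((m:ℝ)+2) * (1 - ((m:ℝ)+3)/(2*((m:ℝ)+4)))
            * (((m:ℝ)+2)*((m:ℝ)+3) - ((m:ℝ)+3)*((m:ℝ)+4)*(((m:ℝ)+3)/(2*((m:ℝ)+4))))
            - ((m:ℝ)+1) * (((m:ℝ)+3) - ((m:ℝ)+4)*(((m:ℝ)+3)/(2*((m:ℝ)+4))))^2)
          = -(((m:ℝ)+1)*((m:ℝ)+3)/(2*((m:ℝ)+4))) := by
        field_simp
        ring
      have hB : (((m:ℝ)+2) * (1 - ((m:ℝ)+3)/(2*((m:ℝ)+4)))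
            * (((m:ℝ)+2)*((m:ℝ)+3) - ((m:ℝ)+3)*((m:ℝ)+4)*(((m:ℝ)+3)/(2*((m:ℝ)+4))))
            - ((m:ℝ)+1) * (((m:ℝ)+3) - ((m:ℝ)+4)*(((m:ℝ)+3)/(2*((m:ℝ)+4))))^2) < 0 := by
        rw [hBval]
        have : (0:ℝ) < ((m:ℝ)+1)*((m:ℝ)+3)/(2*((m:ℝ)+4)) := by positivity
        linarith
      rw [hE2] at key
      rw [key]
      exact mul_neg_of_pos_of_neg (by positivity) hB
    have hu_cont : Continuous (uAux b γ n) := by unfold uAux; fun_prop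
    have hQ_cont : Continuous (QAux b γ n) := by unfold QAux uAux u1Aux u2Aux; fun_prop
    have hppos : 0 < p := by rw [hp]; positivity
    have hf_cont : Continuous f := by
      rw [hf]; exact hu_cont.rpow_const (fun x => Or.inr (le_of_lt hppos))
    have hS : IsOpen {x : ℝ | 0 < uAux b γ n x ∧ QAux b γ n x < 0} :=
      (isOpen_lt continuous_const hu_cont).inter (isOpen_lt hQ_cont continuous_const)
    obtain ⟨ε, hεpos, hball⟩ := Metric.isOpen_iff.1 hS a ⟨hua, hQa⟩
    obtain ⟨d, hd⟩ : ∃ d : ℝ, d = min (ε/2) ((b-a)/2) := ⟨_, rfl⟩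
    have hdpos : 0 < d := hd ▸ lt_min (by linarith) (by linarith)
    have hdle1 : d ≤ ε/2 := hd ▸ min_le_left _ _
    have hdle2 : d ≤ (b-a)/2 := hd ▸ min_le_right _ _
    have hdb : a + d ≤ b := by linarith
    have hIcc_ball : Icc a (a+d) ⊆ Metric.ball a ε := by
      intro x hx
      obtain ⟨hx1, hx2⟩ := hx
      rw [Metric.mem_ball, Real.dist_eq, abs_lt]
      constructor <;> linarith
    have hfderiv : ∀ x ∈ Metric.ball a ε,
        HasDerivAt f (u1Aux b γ n x * p * uAux b γ n x ^ (p - 1)) x := by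
      rw [hf]
      exact fun x hx =>
        (uAux_hasDerivAt b γ n x).rpow_const (Or.inl (ne_of_gt (hball hx).1))
    have hderivf_eq : ∀ x ∈ Metric.ball a ε,
        deriv f x = u1Aux b γ n x * p * uAux b γ n x ^ (p - 1) :=
      fun x hx => (hfderiv x hx).deriv
    have hderiv2f : ∀ x ∈ Metric.ball a ε, deriv (deriv f) x
        = QAux b γ n x * uAux b γ n x ^ (p - 2) / (n:ℝ)^2 := by
      intro x hx
      have hux : 0 < uAux b γ n x := (hball hx).1
      have hne : uAux b γ n x ≠ 0 := ne_of_gt hux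
      have hA : HasDerivAt (fun y => u1Aux b γ n y * p) (u2Aux b γ n x * p) x :=
        (u1Aux_hasDerivAt b γ (by omega) x).mul_const p
      have hB : HasDerivAt (fun y => uAux b γ n y ^ (p-1))
          (u1Aux b γ n x * (p-1) * uAux b γ n x ^ (p - 1 - 1)) x :=
        (uAux_hasDerivAt b γ n x).rpow_const (Or.inl hne)
      have hF := hA.mul hB
      have hEq : deriv f =ᶠ[nhds x] (fun y => u1Aux b γ n y * p * uAux b γ n y ^ (p - 1)) := by
        filter_upwards [Metric.isOpen_ball.mem_nhds hx] with y hy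
        exact hderivf_eq y hy
      have hD : HasDerivAt (deriv f)
          (u2Aux b γ n x * p * uAux b γ n x ^ (p-1)
            + u1Aux b γ n x * p * (u1Aux b γ n x * (p-1) * uAux b γ n x ^ (p - 1 - 1))) x := by
        refine HasDerivAt.congr_of_eventuallyEq ?_ hEq
        exact hF
      rw [hD.deriv]
      have hsplit : uAux b γ n x ^ (p-1) = uAux b γ n x ^ (p-2) * uAux b γ n x := by
        rw [show p - 1 = (p - 2) + 1 by ring, Real.rpow_add hux, Real.rpow_one]
      have hsplit2 : uAux b γ n x ^ (p-1-1) = uAux b γ n x ^ (p-2) := by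
        rw [show p - 1 - 1 = p - 2 by ring]
      rw [hsplit, hsplit2]
      simp only [QAux]
      rw [hp]
      field_simp
      ring
    intro hcv
    have h2nd : ∀ x ∈ interior (Icc a (a+d)), deriv^[2] f x < 0 := by
      rw [interior_Icc]
      intro x hx
      have hxball : x ∈ Metric.ball a ε := hIcc_ball ⟨le_of_lt hx.1, le_of_lt hx.2⟩
      show deriv (deriv f) x < 0
      rw [hderiv2f x hxball]
      exact div_neg_of_neg_of_pos
        (mul_neg_of_neg_of_pos (hball hxball).2 (Real.rpow_pos_of_pos (hball hxball).1 _))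
        (by positivity)
    have hconc : StrictConcaveOn ℝ (Icc a (a+d)) f :=
      strictConcaveOn_of_deriv2_neg (convex_Icc _ _) hf_cont.continuousOn h2nd
    have h1 := hconc.2 (left_mem_Icc.2 (by linarith)) (right_mem_Icc.2 (by linarith))
      (show a ≠ a + d by intro h; linarith [congrArg id h])
      (by norm_num : (0:ℝ) < 1/2) (by norm_num : (0:ℝ) < 1/2) (by norm_num)
    have h2 := hcv.2 (left_mem_Icc.2 (le_of_lt hab))
      (show a + d ∈ Icc a b from ⟨by linarith, hdb⟩)
      (by norm_num : (0:ℝ) ≤ 1/2) (by norm_num : (0:ℝ) ≤ 1/2) (by norm_num)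
    simp only [smul_eq_mul] at h1 h2
    linarith
end

section
/- Let u : (a,b) → ℝ be twice continuously differentiable, strictly increasing, concave, with u(b⁻) limit equal to 0 (normalize u(b) = 0). Then x ↦ (-u(x))^(1/n) is convex on (a,b) if and only if u(x)·u''(x) / (u'(x))² ≥ (n-1)/n for all x in (a,b). -/
open Set Filter

lemma aux_monotoneOn_deriv_nonneg {f : ℝ → ℝ} {s : Set ℝ} {x d : ℝ} (hs : IsOpen s)
    (hm : MonotoneOn f s) (hx : x ∈ s) (hf : HasDerivAt f d x) : 0 ≤ d := by
  have ht := hasDerivAt_iff_tendsto_slope.mp hf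
  refine ge_of_tendsto ht ?_
  have hmem : s \ {x} ∈ nhdsWithin x {x}ᶜ :=
    diff_mem_nhdsWithin_compl (hs.mem_nhds hx) _
  filter_upwards [hmem] with y hy
  have hys : y ∈ s := hy.1
  have hyx : y ≠ x := hy.2
  rw [slope_def_field]
  rcases lt_or_gt_of_ne hyx with h | h
  · have h1 : f y ≤ f x := hm hys hx h.le
    have h2 : y - x < 0 := by linarith
    rw [div_nonneg_iff]
    right
    constructor <;> linarith
  · have h1 : f x ≤ f y := hm hx hys h.le
    have h2 : 0 < y - x := by linarith
    exact div_nonneg (by linarith) h2.le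

theorem stmt_6 (n : ℕ) (a b : ℝ) (u : ℝ → ℝ)
    (hn : 1 ≤ n) (hab : a < b)
    (hu : ContDiff ℝ 2 u)
    (hmono : StrictMonoOn u (Set.Ioo a b))
    (hconc : ConcaveOn ℝ (Set.Ioo a b) u)
    (hub : u b = 0) :
    ConvexOn ℝ (Set.Ioo a b) (fun x => (-u x) ^ ((1 : ℝ) / n)) ↔
      ∀ x ∈ Set.Ioo a b,
        ((n : ℝ) - 1) / n ≤ u x * deriv (deriv u) x / (deriv u x) ^ 2 := by
  have hnR : (0:ℝ) < (n:ℝ) := by exact_mod_cast hn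
  set p : ℝ := (1:ℝ) / n with hpdef
  have hp : 0 < p := by positivity
  have hu2 : ContDiff ℝ ((1:WithTop ℕ∞) + 1) u := by
    convert hu using 2
    norm_num
  have hud : Differentiable ℝ u := hu.differentiable (by norm_num)
  have hu'd : Differentiable ℝ (deriv u) :=
    ((contDiff_succ_iff_deriv.mp hu2).2.2).differentiable (by norm_num)
  -- u < 0 on Ioo
  have hneg : ∀ x ∈ Set.Ioo a b, u x < 0 := by
    intro x hx
    set y := (x + b) / 2 with hy
    have hxy : x < y := by simp only [hy]; linarith [hx.2]
    have hyb : y < b := by simp only [hy]; linarith [hx.2]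
    have hyI : y ∈ Set.Ioo a b := ⟨hx.1.trans hxy, hyb⟩
    have h1 : u x < u y := hmono hx hyI hxy
    have h2 : u y ≤ u b := by
      have htend : Tendsto u (nhdsWithin b (Set.Iio b)) (nhds (u b)) :=
        (hud.continuous.continuousAt).continuousWithinAt
      refine ge_of_tendsto htend ?_
      filter_upwards [Ioo_mem_nhdsLT_of_mem (Set.mem_Ioc.mpr ⟨hyb, le_rfl⟩)] with z hz
      exact (hmono hyI ⟨hyI.1.trans hz.1, hz.2⟩ hz.1).le
    rw [hub] at h2; linarith
  -- deriv u antitone and positive on Ioo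
  have hanti : AntitoneOn (deriv u) (Set.Ioo a b) :=
    hconc.antitoneOn_deriv (fun x _ => hud x)
  have hdpos : ∀ x ∈ Set.Ioo a b, 0 < deriv u x := by
    intro x hx
    set z := (x + b) / 2 with hz
    set y := (z + b) / 2 with hyy
    have hxz : x < z := by simp only [hz]; linarith [hx.2]
    have hzy : z < y := by simp only [hyy, hz]; linarith [hx.2]
    have hyb : y < b := by simp only [hyy, hz]; linarith [hx.2]
    have hzI : z ∈ Set.Ioo a b := ⟨hx.1.trans hxz, hzy.trans hyb⟩
    have hyI : y ∈ Set.Ioo a b := ⟨hzI.1.trans hzy, hyb⟩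
    obtain ⟨c, hc, hceq⟩ := exists_hasDerivAt_eq_slope u (deriv u) hzy
      (hud.continuous.continuousOn) (fun t _ => (hud t).hasDerivAt)
    have hcI : c ∈ Set.Ioo a b := ⟨hzI.1.trans hc.1, hc.2.trans hyb⟩
    have hslope : 0 < (u y - u z) / (y - z) := by
      have := hmono hzI hyI hzy
      have h3 : 0 < u y - u z := by linarith
      exact div_pos h3 (by linarith)
    have := hanti hx hcI (hxz.trans hc.1).le
    rw [hceq] at this
    linarith
  -- first derivative
  set g : ℝ → ℝ := fun x => -deriv u x * p * (-u x) ^ (p - 1) with hgdef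
  have hvd : ∀ x ∈ Set.Ioo a b, HasDerivAt (fun x => (-u x) ^ p) (g x) x := by
    intro x hx
    have h1 : HasDerivAt (fun x => -u x) (-deriv u x) x := (hud x).hasDerivAt.neg
    exact h1.rpow_const (Or.inl (by have := hneg x hx; linarith))
  -- second derivative
  set G : ℝ → ℝ := fun x =>
    -deriv (deriv u) x * p * (-u x) ^ (p - 1) +
      -deriv u x * p * (-deriv u x * (p - 1) * (-u x) ^ (p - 1 - 1)) with hGdef
  have hgd : ∀ x ∈ Set.Ioo a b, HasDerivAt g (G x) x := by
    intro x hx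
    have h1 : HasDerivAt (fun x => -deriv u x * p) (-deriv (deriv u) x * p) x :=
      ((hu'd x).hasDerivAt.neg).mul_const p
    have h2 : HasDerivAt (fun x => (-u x) ^ (p - 1))
        (-deriv u x * (p - 1) * (-u x) ^ (p - 1 - 1)) x :=
      ((hud x).hasDerivAt.neg).rpow_const (Or.inl (by have := hneg x hx; show -u x ≠ 0; linarith))
    exact h1.mul h2
  -- G x nonneg iff the stated inequality
  have hkey : ∀ x ∈ Set.Ioo a b,
      (0 ≤ G x ↔ ((n : ℝ) - 1) / n ≤ u x * deriv (deriv u) x / (deriv u x) ^ 2) := by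
    intro x hx
    have hw : 0 < -u x := by have := hneg x hx; linarith
    have hq : 0 < deriv u x := hdpos x hx
    have hA : 0 < (-u x) ^ (p - 1 - 1) := Real.rpow_pos_of_pos hw _
    have hsplit : (-u x) ^ (p - 1) = (-u x) ^ (p - 1 - 1) * (-u x) := by
      rw [← Real.rpow_add_one (ne_of_gt hw)]; ring_nf
    have hGeq : G x = p * (-u x) ^ (p - 1 - 1) *
        (u x * deriv (deriv u) x + (p - 1) * (deriv u x) ^ 2) := by
      simp only [hGdef, hsplit]; ring
    rw [hGeq]
    constructor
    · intro h
      have h2 : 0 ≤ u x * deriv (deriv u) x + (p - 1) * (deriv u x) ^ 2 := by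
        by_contra hcon
        push_neg at hcon
        nlinarith [mul_pos hp hA]
      rw [le_div_iff₀ (pow_pos hq 2)]
      have hpn : ((n:ℝ) - 1) / n = 1 - p := by rw [hpdef]; field_simp
      rw [hpn]
      nlinarith
    · intro h
      have h2 : 0 ≤ u x * deriv (deriv u) x + (p - 1) * (deriv u x) ^ 2 := by
        rw [le_div_iff₀ (pow_pos hq 2)] at h
        have hpn : ((n:ℝ) - 1) / n = 1 - p := by
          rw [hpdef]; field_simp
        rw [hpn] at h
        nlinarith
      positivity
  constructor
  · -- convex → inequality
    intro hcv x hx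
    have hmono' : MonotoneOn (deriv (fun x => (-u x) ^ p)) (Set.Ioo a b) :=
      hcv.monotoneOn_deriv (fun y hy => (hvd y hy).differentiableAt)
    have hgm : MonotoneOn g (Set.Ioo a b) := by
      intro y hy z hz hyz
      have e1 := (hvd y hy).deriv
      have e2 := (hvd z hz).deriv
      rw [← e1, ← e2]
      exact hmono' hy hz hyz
    have := aux_monotoneOn_deriv_nonneg isOpen_Ioo hgm hx (hgd x hx)
    exact (hkey x hx).mp this
  · -- inequality → convex
    intro hineq
    refine convexOn_of_hasDerivWithinAt2_nonneg (f' := g) (f'' := G) (convex_Ioo a b) ?_ ?_ ?_ ?_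
    · intro x hx
      exact ((hvd x hx).differentiableAt.continuousAt).continuousWithinAt
    · intro x hx
      rw [interior_Ioo] at hx ⊢
      exact (hvd x hx).hasDerivWithinAt
    · intro x hx
      rw [interior_Ioo] at hx ⊢
      exact (hgd x hx).hasDerivWithinAt
    · intro x hx
      rw [interior_Ioo] at hx
      exact (hkey x hx).mpr (hineq x hx)
end

section
/- Let n be a positive integer, a < b, and let f : [a,b] → ℝ be n-times continuously differentiable with (-1)^k f^(k)(x) ≤ 0 on [a,b] for k = 1,…,n, and suppose (f(b) - f(x))^(1/n) is convex on [a,b]. Then for every random variable X with values in [a,b]: E[f(X)] ≤ f(b - (E[(b-X)^n])^(1/n)) ≤ f(E[X]). -/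
open MeasureTheory

lemma aux_cross {L : ℝ} {h : ℝ → ℝ} (hcv : ConvexOn ℝ (Set.Icc 0 L) h) (h0 : h 0 = 0)
    {s s' : ℝ} (hs : 0 ≤ s) (hss' : s ≤ s') (hs'L : s' ≤ L) : h s * s' ≤ h s' * s := by
  rcases eq_or_lt_of_le (hs.trans hss') with h0' | hs'pos
  · have : s = 0 := le_antisymm (hss'.trans h0'.symm.le) hs
    simp [this, ← h0', h0]
  · have hmem0 : (0:ℝ) ∈ Set.Icc 0 L := ⟨le_rfl, (hs.trans hss').trans hs'L⟩
    have hmem' : s' ∈ Set.Icc 0 L := ⟨(hs.trans hss'), hs'L⟩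
    have key := hcv.2 hmem0 hmem'
      (show (0:ℝ) ≤ 1 - s/s' by
        have : s/s' ≤ 1 := (div_le_one hs'pos).2 hss'; linarith)
      (show (0:ℝ) ≤ s/s' by positivity)
      (show (1 - s/s') + s/s' = 1 by ring)
    have harg : (1 - s / s') • (0:ℝ) + (s / s') • s' = s := by
      rw [smul_eq_mul, smul_eq_mul, mul_zero, zero_add, div_mul_cancel₀ s hs'pos.ne']
    rw [harg, h0, smul_eq_mul, smul_eq_mul, mul_zero, zero_add] at key
    calc h s * s' ≤ s / s' * h s' * s' := mul_le_mul_of_nonneg_right key hs'pos.le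
      _ = h s' * s := by field_simp

lemma psi_convexOn (n : ℕ) (hn : 1 ≤ n) {L : ℝ} (hL : 0 < L) {h : ℝ → ℝ}
    (hcv : ConvexOn ℝ (Set.Icc 0 L) h) (h0 : h 0 = 0)
    (hnn : ∀ s ∈ Set.Icc 0 L, 0 ≤ h s) :
    ConvexOn ℝ (Set.Icc 0 (L ^ n)) (fun t => (h (t ^ ((1:ℝ)/n))) ^ n) := by
  have hnne : n ≠ 0 := by omega
  have hnr : (0:ℝ) < (1:ℝ)/n := by positivity
  refine convexOn_of_slope_mono_adjacent (convex_Icc _ _) ?_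
  intro t1 t2 t3 ht1 ht3 h12 h23
  set s1 := t1 ^ ((1:ℝ)/n) with hs1def
  set s2 := t2 ^ ((1:ℝ)/n) with hs2def
  set s3 := t3 ^ ((1:ℝ)/n) with hs3def
  have ht1n : (0:ℝ) ≤ t1 := ht1.1
  have ht2n : (0:ℝ) ≤ t2 := ht1n.trans h12.le
  have ht3n : (0:ℝ) ≤ t3 := ht2n.trans h23.le
  have hs1n : 0 ≤ s1 := Real.rpow_nonneg ht1n _
  have hs12 : s1 < s2 := Real.rpow_lt_rpow ht1n h12 hnr
  have hs23 : s2 < s3 := Real.rpow_lt_rpow ht2n h23 hnr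
  have hs2pos : 0 < s2 := lt_of_le_of_lt hs1n hs12
  have hs3L : s3 ≤ L := by
    rw [hs3def, one_div]
    calc t3 ^ ((n:ℝ))⁻¹ ≤ (L ^ n) ^ ((n:ℝ))⁻¹ := Real.rpow_le_rpow ht3n ht3.2 (by positivity)
      _ = L := Real.pow_rpow_inv_natCast hL.le hnne
  have ht1e : t1 = s1 ^ n := by
    rw [hs1def, one_div]; exact (Real.rpow_inv_natCast_pow ht1n hnne).symm
  have ht2e : t2 = s2 ^ n := by
    rw [hs2def, one_div]; exact (Real.rpow_inv_natCast_pow ht2n hnne).symm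
  have ht3e : t3 = s3 ^ n := by
    rw [hs3def, one_div]; exact (Real.rpow_inv_natCast_pow ht3n hnne).symm
  have hm1 : s1 ∈ Set.Icc 0 L := ⟨hs1n, (hs12.le.trans hs23.le).trans hs3L⟩
  have hm2 : s2 ∈ Set.Icc 0 L := ⟨hs2pos.le, hs23.le.trans hs3L⟩
  have hm3 : s3 ∈ Set.Icc 0 L := ⟨hs1n.trans (hs12.le.trans hs23.le), hs3L⟩
  have h1nn : 0 ≤ h s1 := hnn _ hm1
  have h2nn : 0 ≤ h s2 := hnn _ hm2
  have h3nn : 0 ≤ h s3 := hnn _ hm3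
  have cross1 : h s1 * s2 ≤ h s2 * s1 := aux_cross hcv h0 hs1n hs12.le hm2.2
  have cross2 : h s2 * s3 ≤ h s3 * s2 := aux_cross hcv h0 hs2pos.le hs23.le hm3.2
  have mono21 : h s1 ≤ h s2 := by
    have : h s1 * s2 ≤ h s2 * s2 :=
      cross1.trans (mul_le_mul_of_nonneg_left hs12.le h2nn)
    exact le_of_mul_le_mul_right this hs2pos
  have mono32 : h s2 ≤ h s3 := by
    have : h s2 * s3 ≤ h s3 * s3 :=
      cross2.trans (mul_le_mul_of_nonneg_left hs23.le h3nn)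
    exact le_of_mul_le_mul_right this (hs2pos.trans hs23)
  have slopeC : (h s2 - h s1) * (s3 - s2) ≤ (h s3 - h s2) * (s2 - s1) := by
    have := hcv.slope_mono_adjacent hm1 hm3 hs12 hs23
    rw [div_le_div_iff₀ (by linarith) (by linarith)] at this
    linarith
  show ((h s2) ^ n - (h s1) ^ n) / (t2 - t1) ≤ ((h s3) ^ n - (h s2) ^ n) / (t3 - t2)
  rw [div_le_div_iff₀ (by linarith) (by linarith), ht1e, ht2e, ht3e]
  set P21 := ∑ i ∈ Finset.range n, (h s2) ^ i * (h s1) ^ (n - 1 - i) with hP21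
  set P32 := ∑ i ∈ Finset.range n, (h s3) ^ i * (h s2) ^ (n - 1 - i) with hP32
  set Q21 := ∑ i ∈ Finset.range n, s2 ^ i * s1 ^ (n - 1 - i) with hQ21
  set Q32 := ∑ i ∈ Finset.range n, s3 ^ i * s2 ^ (n - 1 - i) with hQ32
  have e1 : (h s2) ^ n - (h s1) ^ n = P21 * (h s2 - h s1) := (geom_sum₂_mul _ _ n).symm
  have e2 : (h s3) ^ n - (h s2) ^ n = P32 * (h s3 - h s2) := (geom_sum₂_mul _ _ n).symm
  have e3 : s3 ^ n - s2 ^ n = Q32 * (s3 - s2) := (geom_sum₂_mul _ _ n).symm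
  have e4 : s2 ^ n - s1 ^ n = Q21 * (s2 - s1) := (geom_sum₂_mul _ _ n).symm
  rw [e1, e2, e3, e4]
  have hQ21nn : 0 ≤ Q21 := Finset.sum_nonneg fun i _ =>
    mul_nonneg (pow_nonneg hs2pos.le _) (pow_nonneg hs1n _)
  have hQ32nn : 0 ≤ Q32 := Finset.sum_nonneg fun i _ =>
    mul_nonneg (pow_nonneg (hs2pos.trans hs23).le _) (pow_nonneg hs2pos.le _)
  have hA : P21 * s2 ^ (n - 1) ≤ (h s2) ^ (n - 1) * Q21 := by
    rw [hP21, hQ21, Finset.sum_mul, Finset.mul_sum]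
    refine Finset.sum_le_sum fun i hi => ?_
    have hi' : i + (n - 1 - i) = n - 1 := by
      have := Finset.mem_range.1 hi; omega
    have expand : ∀ x : ℝ, x ^ (n - 1) = x ^ i * x ^ (n - 1 - i) := fun x => by
      rw [← pow_add, hi']
    calc (h s2) ^ i * (h s1) ^ (n - 1 - i) * s2 ^ (n - 1)
        = (h s2) ^ i * s2 ^ i * (h s1 * s2) ^ (n - 1 - i) := by
          rw [expand s2, mul_pow]; ring
      _ ≤ (h s2) ^ i * s2 ^ i * (h s2 * s1) ^ (n - 1 - i) := by
          refine mul_le_mul_of_nonneg_left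
            (pow_le_pow_left₀ (mul_nonneg h1nn hs2pos.le) cross1 _)
            (mul_nonneg (pow_nonneg h2nn _) (pow_nonneg hs2pos.le _))
      _ = (h s2) ^ (n - 1) * (s2 ^ i * s1 ^ (n - 1 - i)) := by
          rw [expand (h s2), mul_pow]; ring
  have hB : (h s2) ^ (n - 1) * Q32 ≤ P32 * s2 ^ (n - 1) := by
    rw [hP32, hQ32, Finset.sum_mul, Finset.mul_sum]
    refine Finset.sum_le_sum fun i hi => ?_
    have hi' : i + (n - 1 - i) = n - 1 := by
      have := Finset.mem_range.1 hi; omega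
    have expand : ∀ x : ℝ, x ^ (n - 1) = x ^ i * x ^ (n - 1 - i) := fun x => by
      rw [← pow_add, hi']
    calc (h s2) ^ (n - 1) * (s3 ^ i * s2 ^ (n - 1 - i))
        = (h s2 * s3) ^ i * (h s2 * s2) ^ (n - 1 - i) := by
          rw [expand (h s2), mul_pow, mul_pow]; ring
      _ ≤ (h s3 * s2) ^ i * (h s2 * s2) ^ (n - 1 - i) := by
          refine mul_le_mul_of_nonneg_right
            (pow_le_pow_left₀ (mul_nonneg h2nn (hs2pos.trans hs23).le) cross2 _)
            (pow_nonneg (mul_nonneg h2nn hs2pos.le) _)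
      _ = (h s3) ^ i * (h s2) ^ (n - 1 - i) * s2 ^ (n - 1) := by
          rw [expand s2, mul_pow, mul_pow]; ring
  rw [← mul_le_mul_iff_of_pos_right (pow_pos hs2pos (n - 1))]
  calc P21 * (h s2 - h s1) * (Q32 * (s3 - s2)) * s2 ^ (n - 1)
      = (P21 * s2 ^ (n - 1)) * ((h s2 - h s1) * (s3 - s2) * Q32) := by ring
    _ ≤ ((h s2) ^ (n - 1) * Q21) * ((h s2 - h s1) * (s3 - s2) * Q32) := by
        refine mul_le_mul_of_nonneg_right hA
          (mul_nonneg (mul_nonneg (by linarith) (by linarith)) hQ32nn)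
    _ = ((h s2) ^ (n - 1) * Q21 * Q32) * ((h s2 - h s1) * (s3 - s2)) := by ring
    _ ≤ ((h s2) ^ (n - 1) * Q21 * Q32) * ((h s3 - h s2) * (s2 - s1)) := by
        refine mul_le_mul_of_nonneg_left slopeC
          (mul_nonneg (mul_nonneg (pow_nonneg h2nn _) hQ21nn) hQ32nn)
    _ = ((h s2) ^ (n - 1) * Q32) * (Q21 * ((h s3 - h s2) * (s2 - s1))) := by ring
    _ ≤ (P32 * s2 ^ (n - 1)) * (Q21 * ((h s3 - h s2) * (s2 - s1))) := by
        refine mul_le_mul_of_nonneg_right hB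
          (mul_nonneg hQ21nn (mul_nonneg (by linarith) (by linarith)))
    _ = P32 * (h s3 - h s2) * (Q21 * (s2 - s1)) * s2 ^ (n - 1) := by ring

theorem stmt_8 (n : ℕ) (a b : ℝ) (f : ℝ → ℝ)
    (hn : 1 ≤ n) (hab : a < b)
    (hf : ContDiff ℝ n f)
    (hsign : ∀ k, 1 ≤ k → k ≤ n → ∀ x ∈ Set.Icc a b,
      (-1 : ℝ) ^ k * iteratedDeriv k f x ≤ 0)
    (hconv : ConvexOn ℝ (Set.Icc a b) (fun x => (f b - f x) ^ ((1 : ℝ) / n)))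
    (μ : Measure ℝ) [IsProbabilityMeasure μ]
    (hμ : μ (Set.Icc a b) = 1) :
    (∫ x, f x ∂μ) ≤ f (b - (∫ x, (b - x) ^ n ∂μ) ^ ((1 : ℝ) / n)) ∧
      f (b - (∫ x, (b - x) ^ n ∂μ) ^ ((1 : ℝ) / n)) ≤ f (∫ x, x ∂μ) := by
  have hnne : n ≠ 0 := by omega
  have hnr : (0:ℝ) < (1:ℝ)/n := by positivity
  set L := b - a with hLdef
  have hL : 0 < L := by rw [hLdef]; linarith
  have haeIcc : ∀ᵐ x ∂μ, x ∈ Set.Icc a b := by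
    rw [MeasureTheory.ae_iff]
    have hs : {x : ℝ | ¬ x ∈ Set.Icc a b} = (Set.Icc a b)ᶜ := rfl
    rw [hs, measure_compl measurableSet_Icc (measure_ne_top μ _), hμ, measure_univ, tsub_self]
  have hint : ∀ g : ℝ → ℝ, Continuous g → Integrable g μ := by
    intro g hg
    obtain ⟨C, hC⟩ :=
      (isCompact_Icc (a := a) (b := b)).exists_bound_of_continuousOn hg.continuousOn
    exact (integrable_const C).mono' hg.aestronglyMeasurable (haeIcc.mono fun x hx => hC x hx)
  have hfc : Continuous f := hf.continuous
  have hfd : Differentiable ℝ f := hf.differentiable (by exact_mod_cast hnne)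
  have hmono : MonotoneOn f (Set.Icc a b) := by
    refine monotoneOn_of_deriv_nonneg (convex_Icc a b) hfc.continuousOn
      hfd.differentiableOn ?_
    intro x hx
    have hx' : x ∈ Set.Icc a b := interior_subset hx
    have hs := hsign 1 le_rfl hn x hx'
    rw [iteratedDeriv_one, pow_one, neg_one_mul] at hs
    linarith
  have hfb : ∀ x ∈ Set.Icc a b, f x ≤ f b := fun x hx =>
    hmono hx (Set.right_mem_Icc.2 hab.le) hx.2
  set h : ℝ → ℝ := fun s => (f b - f (b - s)) ^ ((1:ℝ)/n) with hhdef
  have hmemb : ∀ s ∈ Set.Icc (0:ℝ) L, b - s ∈ Set.Icc a b := by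
    intro s hs
    exact ⟨by have := hs.2; rw [hLdef] at this; linarith, by linarith [hs.1]⟩
  have hFnn : ∀ s ∈ Set.Icc (0:ℝ) L, 0 ≤ f b - f (b - s) := fun s hs =>
    sub_nonneg.2 (hfb _ (hmemb s hs))
  have hcvh : ConvexOn ℝ (Set.Icc 0 L) h := by
    refine ⟨convex_Icc _ _, ?_⟩
    intro x hx y hy p q hp hq hpq
    have harg : b - (p • x + q • y) = p • (b - x) + q • (b - y) := by
      simp only [smul_eq_mul]; linear_combination (-b) * hpq
    have key := hconv.2 (hmemb x hx) (hmemb y hy) hp hq hpq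
    show (f b - f (b - (p • x + q • y))) ^ ((1:ℝ)/n) ≤ p • h x + q • h y
    rw [harg]
    exact key
  have hh0 : h 0 = 0 := by
    show (f b - f (b - 0)) ^ ((1:ℝ)/n) = 0
    rw [sub_zero, sub_self]
    exact Real.zero_rpow hnr.ne'
  have hhnn : ∀ s ∈ Set.Icc (0:ℝ) L, 0 ≤ h s := fun s hs => Real.rpow_nonneg (hFnn s hs) _
  have hhpow : ∀ s ∈ Set.Icc (0:ℝ) L, (h s) ^ n = f b - f (b - s) := by
    intro s hs
    show ((f b - f (b - s)) ^ ((1:ℝ)/n)) ^ n = f b - f (b - s)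
    rw [one_div]
    exact Real.rpow_inv_natCast_pow (hFnn s hs) hnne
  set M := L ^ n with hMdef
  set ψ : ℝ → ℝ := fun t => f b - f (b - t ^ ((1:ℝ)/n)) with hψdef
  have hmemM : ∀ t ∈ Set.Icc (0:ℝ) M, t ^ ((1:ℝ)/n) ∈ Set.Icc (0:ℝ) L := by
    intro t ht
    refine ⟨Real.rpow_nonneg ht.1 _, ?_⟩
    rw [one_div]
    calc t ^ ((n:ℝ))⁻¹ ≤ (L ^ n) ^ ((n:ℝ))⁻¹ := Real.rpow_le_rpow ht.1 ht.2 (by positivity)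
      _ = L := Real.pow_rpow_inv_natCast hL.le hnne
  have hψconv : ConvexOn ℝ (Set.Icc 0 M) ψ := by
    refine (psi_convexOn n hn hL hcvh hh0 hhnn).congr ?_
    intro t ht
    show (h (t ^ ((1:ℝ)/n))) ^ n = ψ t
    rw [hhpow _ (hmemM t ht)]
  have hψcont : Continuous ψ := by
    refine continuous_const.sub ?_
    exact hfc.comp (continuous_const.sub (Real.continuous_rpow_const hnr.le))
  have hgx : Continuous (fun x : ℝ => (b - x) ^ n) :=
    (continuous_const.sub continuous_id).pow n
  have higx : Integrable (fun x => (b - x) ^ n) μ := hint _ hgx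
  have hif : Integrable f μ := hint f hfc
  have hiψ : Integrable (ψ ∘ fun x => (b - x) ^ n) μ := hint _ (hψcont.comp hgx)
  have hmemae : ∀ᵐ x ∂μ, (b - x) ^ n ∈ Set.Icc (0:ℝ) M := by
    filter_upwards [haeIcc] with x hx
    refine ⟨pow_nonneg (by linarith [hx.2]) _, ?_⟩
    rw [hMdef, hLdef]
    exact pow_le_pow_left₀ (by linarith [hx.2]) (by linarith [hx.1]) n
  set m := ∫ x, (b - x) ^ n ∂μ with hmdef
  have hJ1 : ψ m ≤ ∫ x, ψ ((b - x) ^ n) ∂μ :=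
    hψconv.map_integral_le hψcont.continuousOn isClosed_Icc hmemae higx hiψ
  have heq : ∫ x, ψ ((b - x) ^ n) ∂μ = f b - ∫ x, f x ∂μ := by
    have hcg : ∀ᵐ x ∂μ, ψ ((b - x) ^ n) = f b - f x := by
      filter_upwards [haeIcc] with x hx
      have hbx : (0:ℝ) ≤ b - x := by linarith [hx.2]
      show f b - f (b - ((b - x) ^ n) ^ ((1:ℝ)/n)) = f b - f x
      rw [one_div, Real.pow_rpow_inv_natCast hbx hnne, sub_sub_cancel]
    rw [integral_congr_ae hcg, integral_sub (hint _ continuous_const) hif, integral_const]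
    simp [measure_univ]
  have hψm : ψ m = f b - f (b - m ^ ((1:ℝ)/n)) := rfl
  have hfirst : (∫ x, f x ∂μ) ≤ f (b - m ^ ((1:ℝ)/n)) := by
    rw [heq] at hJ1
    rw [hψm] at hJ1
    linarith
  have him : m ∈ Set.Icc (0:ℝ) M := by
    constructor
    · exact integral_nonneg_of_ae (hmemae.mono fun x hx => hx.1)
    · have hle := integral_mono_ae higx (integrable_const M) (hmemae.mono fun x hx => hx.2)
      simpa [integral_const, measure_univ] using hle
  have hpmem : b - m ^ ((1:ℝ)/n) ∈ Set.Icc a b := hmemb _ (hmemM m him)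
  have hix : Integrable (fun x : ℝ => x) μ := hint _ continuous_id
  have hEX : (∫ x, x ∂μ) ∈ Set.Icc a b := by
    constructor
    · have hle := integral_mono_ae (integrable_const a) hix (haeIcc.mono fun x hx => hx.1)
      simpa [integral_const, measure_univ] using hle
    · have hle := integral_mono_ae hix (integrable_const b) (haeIcc.mono fun x hx => hx.2)
      simpa [integral_const, measure_univ] using hle
  have hibx : Integrable (fun x : ℝ => b - x) μ := hint _ (continuous_const.sub continuous_id)
  have haebx : ∀ᵐ x ∂μ, b - x ∈ Set.Ici (0:ℝ) :=
    haeIcc.mono fun x hx => by simp only [Set.mem_Ici]; linarith [hx.2]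
  have hJ2 : (∫ x, b - x ∂μ) ^ n ≤ m := by
    have hcomp : Integrable ((fun y : ℝ => y ^ n) ∘ fun x : ℝ => b - x) μ := higx
    exact (convexOn_pow n).map_integral_le (continuous_pow n).continuousOn
      isClosed_Ici haebx hibx hcomp
  have hEbx : ∫ x, b - x ∂μ = b - ∫ x, x ∂μ := by
    rw [integral_sub (hint _ continuous_const) hix, integral_const]
    simp [measure_univ]
  have hbxnn : 0 ≤ ∫ x, b - x ∂μ := by rw [hEbx]; linarith [hEX.2]
  have hle : b - m ^ ((1:ℝ)/n) ≤ ∫ x, x ∂μ := by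
    have h1 : (∫ x, b - x ∂μ) ≤ m ^ ((1:ℝ)/n) := by
      rw [one_div]
      have h2 := Real.rpow_le_rpow (pow_nonneg hbxnn n) hJ2
        (by positivity : (0:ℝ) ≤ ((n:ℝ))⁻¹)
      rwa [Real.pow_rpow_inv_natCast hbxnn hnne] at h2
    rw [hEbx] at h1
    linarith
  exact ⟨hfirst, hmono hpmem hEX hle⟩
end

section
/- Let F and G be distribution functions on [a,b] and let n ≥ 1. Suppose ∫_a^b max{c-x,0}^n dF(x) ≥ ∫_a^b max{c-x,0}^n dG(x) for all c in [a,b]. Then for every u ∈ C^{n+1}([a,b]) with (-1)^k u^(k) ≤ 0 on [a,b] for k = 1,…,n+1 and u^(k)(b) = 0 for k = 1,…,n-1, we have ∫_a^b u dF ≤ ∫_a^b u dG. -/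
open MeasureTheory

private lemma taylor_key (n : ℕ) (hn : 1 ≤ n) {u : ℝ → ℝ} (hu : ContDiff ℝ (n+1) u) {a b x : ℝ}
    (hder : ∀ k, 1 ≤ k → k ≤ n - 1 → iteratedDeriv k u b = 0)
    (hx : x ∈ Set.Icc a b) :
    u x = u b + ((-1)^n * iteratedDeriv n u b / (n.factorial : ℝ)) * max (b - x) 0 ^ n
      + ∫ t in Set.Ioc a b, ((-1)^(n+1) * iteratedDeriv (n+1) u t / (n.factorial : ℝ)) * max (t - x) 0 ^ n := by
  obtain ⟨hax, hxb⟩ := hx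
  have hab : a ≤ b := hax.trans hxb
  have hD : Continuous (iteratedDeriv (n+1) u) :=
    hu.continuous_iteratedDeriv (n+1) le_rfl
  have hderiv : ∀ t : ℝ, HasDerivAt (fun y => taylorWithinEval u n Set.univ y x)
      (((n.factorial : ℝ)⁻¹ * (x - t) ^ n) • iteratedDeriv (n+1) u t) t := by
    intro t
    have h := hasDerivWithinAt_taylorWithinEval (f := u) (x := x) (y := t) (n := n)
      (s := Set.univ) (s' := Set.univ)
      uniqueDiffOn_univ Filter.univ_mem (Set.mem_univ t)
      (le_refl _) ((hu.of_le (show ((n:ℕ) : WithTop ℕ∞) ≤ ((n+1 : ℕ) : WithTop ℕ∞) by exact_mod_cast Nat.le_succ n)).contDiffOn)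
      ?_
    · rw [hasDerivWithinAt_univ] at h
      rwa [iteratedDerivWithin_univ] at h
    · rw [iteratedDerivWithin_univ]
      exact ((hu.differentiable_iteratedDeriv n (by exact_mod_cast Nat.lt_succ_self n)) t).differentiableWithinAt
  have hInt : IntervalIntegrable (fun t => ((n.factorial : ℝ)⁻¹ * (x - t) ^ n) • iteratedDeriv (n+1) u t) volume x b :=
    (Continuous.smul (by fun_prop : Continuous (fun t : ℝ => (n.factorial : ℝ)⁻¹ * (x - t) ^ n)) hD).intervalIntegrable x b
  have hftc := intervalIntegral.integral_eq_sub_of_hasDerivAt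
    (f := fun y => taylorWithinEval u n Set.univ y x)
    (fun t _ => hderiv t) hInt
  beta_reduce at hftc
  rw [taylorWithinEval_self] at hftc
  -- u x = taylor poly at b  minus the integral
  have hux : u x = taylorWithinEval u n Set.univ b x
      - ∫ t in x..b, ((n.factorial : ℝ)⁻¹ * (x - t) ^ n) • iteratedDeriv (n+1) u t := by
    rw [hftc]; ring
  -- taylor poly at b
  have hpoly : taylorWithinEval u n Set.univ b x
      = u b + ((-1)^n * iteratedDeriv n u b / (n.factorial : ℝ)) * max (b - x) 0 ^ n := by
    rw [taylor_within_apply]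
    simp_rw [iteratedDerivWithin_univ]
    have hsub : ({0, n} : Finset ℕ) ⊆ Finset.range (n+1) := by
      intro k hk; simp at hk ⊢; rcases hk with h | h <;> omega
    rw [← Finset.sum_subset hsub ?_]
    · rw [Finset.sum_pair (by omega : (0:ℕ) ≠ n)]
      have h1 : (x - b)^n = (-1)^n * (b - x)^n := by
        rw [show x - b = -(b-x) by ring, neg_pow]
      have h2 : max (b - x) 0 = b - x := max_eq_left (by linarith)
      simp [h1, h2, iteratedDeriv_zero, smul_eq_mul]
      ring
    · intro k hk hk'
      simp at hk hk'
      rw [hder k (by omega) (by omega), smul_zero]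
  have hqcont : Continuous (fun t => ((-1:ℝ))^(n+1) * iteratedDeriv (n+1) u t / (n.factorial : ℝ) * max (t - x) 0 ^ n) := by
    apply Continuous.mul
    · exact (continuous_const.mul hD).div_const _
    · exact ((continuous_id.sub continuous_const).max continuous_const).pow n
  have hq1 : IntegrableOn (fun t => ((-1:ℝ))^(n+1) * iteratedDeriv (n+1) u t / (n.factorial : ℝ) * max (t - x) 0 ^ n) (Set.Ioc a x) volume :=
    hqcont.integrableOn_Ioc
  have hq2 : IntegrableOn (fun t => ((-1:ℝ))^(n+1) * iteratedDeriv (n+1) u t / (n.factorial : ℝ) * max (t - x) 0 ^ n) (Set.Ioc x b) volume :=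
    hqcont.integrableOn_Ioc
  have hzero : ∫ t in Set.Ioc a x, ((-1:ℝ))^(n+1) * iteratedDeriv (n+1) u t / (n.factorial : ℝ) * max (t - x) 0 ^ n = 0 := by
    rw [setIntegral_congr_fun measurableSet_Ioc (g := fun _ => (0:ℝ))]
    · simp
    · intro t ht
      have : max (t - x) 0 = 0 := max_eq_right (by simp at ht; linarith [ht.2])
      simp [this, zero_pow (by omega : n ≠ 0)]
  have hsplit : (∫ t in Set.Ioc a b, ((-1:ℝ))^(n+1) * iteratedDeriv (n+1) u t / (n.factorial : ℝ) * max (t - x) 0 ^ n)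
      = ∫ t in Set.Ioc x b, ((-1:ℝ))^(n+1) * iteratedDeriv (n+1) u t / (n.factorial : ℝ) * max (t - x) 0 ^ n := by
    rw [← Set.Ioc_union_Ioc_eq_Ioc hax hxb,
      setIntegral_union (Set.Ioc_disjoint_Ioc_of_le le_rfl) measurableSet_Ioc hq1 hq2, hzero, zero_add]
  have hrem : (∫ t in Set.Ioc x b, ((-1:ℝ))^(n+1) * iteratedDeriv (n+1) u t / (n.factorial : ℝ) * max (t - x) 0 ^ n)
      = - ∫ t in x..b, ((n.factorial : ℝ)⁻¹ * (x - t) ^ n) • iteratedDeriv (n+1) u t := by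
    rw [intervalIntegral.integral_of_le hxb, ← integral_neg]
    apply setIntegral_congr_fun measurableSet_Ioc
    intro t ht
    have h1 : max (t - x) 0 = t - x := max_eq_left (by simp at ht; linarith [ht.1])
    have h2 : (x - t)^n = (-1)^n * (t - x)^n := by
      rw [show x - t = -(t-x) by ring, neg_pow]
    dsimp only
    rw [h1, smul_eq_mul, h2]
    rcases neg_one_pow_eq_or ℝ n with h | h <;> rw [pow_succ, h] <;> ring
  rw [hux, hpoly, hsplit, hrem]
  ring


private lemma prod_int (n : ℕ) (a b : ℝ)
    (μ : Measure ℝ) [IsProbabilityMeasure μ] (hμ : μ (Set.Icc a b) = 1)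
    (u : ℝ → ℝ) (hu : ContDiff ℝ (n+1) u) :
    Integrable (fun z : ℝ × ℝ => ((-1:ℝ))^(n+1) * iteratedDeriv (n+1) u z.2 / (n.factorial : ℝ)
      * max (z.2 - z.1) 0 ^ n) (μ.prod (volume.restrict (Set.Ioc a b))) := by
  have hD : Continuous (iteratedDeriv (n+1) u) := hu.continuous_iteratedDeriv (n+1) le_rfl
  have hμc : μ (Set.Icc a b)ᶜ = 0 := by
    rw [measure_compl measurableSet_Icc (measure_ne_top μ _), hμ, measure_univ, tsub_self]
  haveI : IsFiniteMeasure (volume.restrict (Set.Ioc a b)) :=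
    ⟨by rw [Measure.restrict_apply_univ]; exact measure_Ioc_lt_top⟩
  have hFc : Continuous (fun z : ℝ × ℝ => ((-1:ℝ))^(n+1) * iteratedDeriv (n+1) u z.2 / (n.factorial : ℝ)
      * max (z.2 - z.1) 0 ^ n) := by
    apply Continuous.mul
    · exact ((continuous_const.mul (hD.comp continuous_snd)).div_const _)
    · exact ((continuous_snd.sub continuous_fst).max continuous_const).pow n
  obtain ⟨C, hC⟩ := (isCompact_Icc.prod isCompact_Icc :
      IsCompact (Set.Icc a b ×ˢ Set.Icc a b)).exists_bound_of_continuousOn hFc.continuousOn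
  have hprod_ae : ∀ᵐ z ∂(μ.prod (volume.restrict (Set.Ioc a b))),
      z ∈ (Set.Icc a b ×ˢ Set.Icc a b) := by
    rw [Filter.eventually_iff, mem_ae_iff]
    apply measure_mono_null (Set.compl_prod_eq_union _ _).le
    apply measure_union_null
    · rw [Measure.prod_prod, hμc, zero_mul]
    · rw [Measure.prod_prod]
      have : (volume.restrict (Set.Ioc a b)) (Set.Icc a b)ᶜ = 0 := by
        rw [Measure.restrict_apply (measurableSet_Icc.compl)]
        have : (Set.Icc a b)ᶜ ∩ Set.Ioc a b = ∅ := by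
          apply Set.eq_empty_of_forall_notMem
          intro t ⟨ht1, ht2⟩
          exact ht1 (Set.Ioc_subset_Icc_self ht2)
        rw [this, measure_empty]
      rw [this, mul_zero]
  apply Integrable.mono' (integrable_const C) hFc.aestronglyMeasurable
  exact hprod_ae.mono fun z hz => hC z hz

private lemma int_beta (n : ℕ) (a b : ℝ)
    (μ : Measure ℝ) [IsProbabilityMeasure μ] (hμ : μ (Set.Icc a b) = 1)
    (u : ℝ → ℝ) (hu : ContDiff ℝ (n+1) u) :
    Integrable (fun t => ((-1:ℝ))^(n+1) * iteratedDeriv (n+1) u t / (n.factorial : ℝ)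
      * ∫ x, max (t - x) 0 ^ n ∂μ) (volume.restrict (Set.Ioc a b)) := by
  have h := (prod_int n a b μ hμ u hu).integral_prod_right
  simp only [MeasureTheory.integral_const_mul] at h
  exact h

private lemma side (n : ℕ) (hn : 1 ≤ n) (a b : ℝ) (hab : a < b)
    (μ : Measure ℝ) [IsProbabilityMeasure μ] (hμ : μ (Set.Icc a b) = 1)
    (u : ℝ → ℝ) (hu : ContDiff ℝ (n+1) u)
    (hder : ∀ k, 1 ≤ k → k ≤ n - 1 → iteratedDeriv k u b = 0) :
    ∫ x, u x ∂μ = u b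
      + ((-1)^n * iteratedDeriv n u b / (n.factorial : ℝ)) * (∫ x, max (b - x) 0 ^ n ∂μ)
      + ∫ t in Set.Ioc a b, ((-1)^(n+1) * iteratedDeriv (n+1) u t / (n.factorial : ℝ))
          * ∫ x, max (t - x) 0 ^ n ∂μ := by
  have hD : Continuous (iteratedDeriv (n+1) u) := hu.continuous_iteratedDeriv (n+1) le_rfl
  have hμc : μ (Set.Icc a b)ᶜ = 0 := by
    rw [measure_compl measurableSet_Icc (measure_ne_top μ _), hμ, measure_univ, tsub_self]
  have haeμ : ∀ᵐ x ∂μ, x ∈ Set.Icc a b := mem_ae_iff.mpr hμc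
  have hrμ : μ.restrict (Set.Icc a b) = μ := Measure.restrict_eq_self_of_ae_mem haeμ
  have intc : ∀ f : ℝ → ℝ, Continuous f → Integrable f μ := by
    intro f hf
    rw [← hrμ]
    exact hf.continuousOn.integrableOn_compact isCompact_Icc
  haveI : IsFiniteMeasure (volume.restrict (Set.Ioc a b)) :=
    ⟨by rw [Measure.restrict_apply_univ]; exact measure_Ioc_lt_top⟩
  set β : ℝ → ℝ := fun t => ((-1:ℝ))^(n+1) * iteratedDeriv (n+1) u t / (n.factorial : ℝ) with hβdef
  have hF : Integrable (fun z : ℝ × ℝ => β z.2 * max (z.2 - z.1) 0 ^ n)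
      (μ.prod (volume.restrict (Set.Ioc a b))) := prod_int n a b μ hμ u hu
  have hkey : ∀ᵐ x ∂μ, u x = u b
      + ((-1)^n * iteratedDeriv n u b / (n.factorial : ℝ)) * max (b - x) 0 ^ n
      + ∫ t in Set.Ioc a b, β t * max (t - x) 0 ^ n := by
    exact haeμ.mono fun x hx => taylor_key n hn hu hder hx
  rw [integral_congr_ae hkey]
  have int1 : Integrable (fun _ : ℝ => u b) μ := integrable_const _
  have int2 : Integrable (fun x => ((-1:ℝ))^n * iteratedDeriv n u b / (n.factorial : ℝ)
      * max (b - x) 0 ^ n) μ := by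
    apply intc
    exact continuous_const.mul (((continuous_const.sub continuous_id).max continuous_const).pow n)
  have int3 : Integrable (fun x => ∫ t in Set.Ioc a b, β t * max (t - x) 0 ^ n) μ := by
    have := hF.integral_prod_left
    exact this
  have int12 : Integrable (fun x => u b + ((-1:ℝ))^n * iteratedDeriv n u b / (n.factorial : ℝ)
      * max (b - x) 0 ^ n) μ := int1.add int2
  rw [integral_add int12 int3, integral_add int1 int2]
  have e1 : ∫ _ : ℝ, u b ∂μ = u b := by simp
  have e2 : ∫ x, ((-1:ℝ))^n * iteratedDeriv n u b / (n.factorial : ℝ) * max (b - x) 0 ^ n ∂μ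
      = ((-1:ℝ))^n * iteratedDeriv n u b / (n.factorial : ℝ) * ∫ x, max (b - x) 0 ^ n ∂μ := by
    rw [MeasureTheory.integral_const_mul]
  have e3 : ∫ x, (∫ t in Set.Ioc a b, β t * max (t - x) 0 ^ n) ∂μ
      = ∫ t in Set.Ioc a b, β t * ∫ x, max (t - x) 0 ^ n ∂μ := by
    rw [MeasureTheory.integral_integral_swap hF]
    congr 1
    funext t
    rw [MeasureTheory.integral_const_mul]
  rw [e1, e2, e3]

theorem stmt_13 (n : ℕ) (a b : ℝ) (hn : 1 ≤ n) (hab : a < b)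
    (μ ν : Measure ℝ) [IsProbabilityMeasure μ] [IsProbabilityMeasure ν]
    (hμ : μ (Set.Icc a b) = 1) (hν : ν (Set.Icc a b) = 1)
    (hdom : ∀ c ∈ Set.Icc a b,
      (∫ x, max (c - x) 0 ^ n ∂ν) ≤ ∫ x, max (c - x) 0 ^ n ∂μ) :
    ∀ u : ℝ → ℝ, ContDiff ℝ (n + 1) u →
      (∀ k, 1 ≤ k → k ≤ n + 1 → ∀ x ∈ Set.Icc a b,
        (-1 : ℝ) ^ k * iteratedDeriv k u x ≤ 0) →
      (∀ k, 1 ≤ k → k ≤ n - 1 → iteratedDeriv k u b = 0) →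
      (∫ x, u x ∂μ) ≤ ∫ x, u x ∂ν := by
  intro u hu hsign hder
  rw [side n hn a b hab μ hμ u hu hder, side n hn a b hab ν hν u hu hder]
  have hfac : (0:ℝ) < (n.factorial : ℝ) := by positivity
  have hα : ((-1:ℝ))^n * iteratedDeriv n u b / (n.factorial : ℝ) ≤ 0 :=
    div_nonpos_iff.mpr (Or.inr ⟨hsign n hn (by omega) b ⟨hab.le, le_rfl⟩, hfac.le⟩)
  apply add_le_add (add_le_add le_rfl ?_) ?_
  · exact mul_le_mul_of_nonpos_left (hdom b ⟨hab.le, le_rfl⟩) hα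
  · -- integrals over t
    apply integral_mono_ae ?_ ?_ ?_
    · exact int_beta n a b μ hμ u hu
    · exact int_beta n a b ν hν u hu
    · filter_upwards [ae_restrict_mem measurableSet_Ioc] with t ht
      have htI : t ∈ Set.Icc a b := Set.Ioc_subset_Icc_self ht
      have hβ : ((-1:ℝ))^(n+1) * iteratedDeriv (n+1) u t / (n.factorial : ℝ) ≤ 0 :=
        div_nonpos_iff.mpr (Or.inr ⟨hsign (n+1) (by omega) le_rfl t htI, by positivity⟩)
      exact mul_le_mul_of_nonpos_left (hdom t htI) hβ
end

section
/- Let F and G be distribution functions on [a,b] and n ≥ 1. If ∫_a^b u dF ≤ ∫_a^b u dG for every u ∈ C^{n+1}([a,b]) with (-1)^k u^(k) ≤ 0 for k = 1,…,n+1 and u^(k)(b) = 0 for k = 1,…,n-1, then ∫_a^b max{c-x,0}^n dF(x) ≥ ∫_a^b max{c-x,0}^n dG(x) for all c in [a,b]. -/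
open MeasureTheory intervalIntegral Set Filter Asymptotics
open scoped ContDiff Topology

noncomputable section Aux14

lemma expNegInvGlue_mono14 : Monotone expNegInvGlue := by
  intro u v huv
  unfold expNegInvGlue
  split_ifs with h1 h2 h2
  · exact le_rfl
  · exact (Real.exp_pos _).le
  · linarith
  · push_neg at h1 h2
    have : v⁻¹ ≤ u⁻¹ := inv_anti₀ h1 huv
    exact Real.exp_le_exp.2 (by linarith)

lemma smoothTransition_mono14 : Monotone Real.smoothTransition := by
  intro x y hxy
  unfold Real.smoothTransition
  rw [div_le_div_iff₀ (Real.smoothTransition.pos_denom x) (Real.smoothTransition.pos_denom y)]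
  have h1 := expNegInvGlue_mono14 hxy
  have h2 := expNegInvGlue_mono14 (show 1 - y ≤ 1 - x by linarith)
  nlinarith [expNegInvGlue.nonneg x, expNegInvGlue.nonneg y,
    expNegInvGlue.nonneg (1 - x), expNegInvGlue.nonneg (1 - y)]

lemma deriv_nonpos_of_antitone14 {f : ℝ → ℝ} {x : ℝ} (hf : Antitone f)
    (hd : DifferentiableAt ℝ f x) : deriv f x ≤ 0 := by
  have h := hd.hasDerivAt
  rw [hasDerivAt_iff_tendsto_slope] at h
  refine le_of_tendsto h ?_
  filter_upwards [self_mem_nhdsWithin] with y hy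
  rcases lt_or_gt_of_ne (hy : y ≠ x) with h1 | h1
  · rw [slope_def_field]
    exact div_nonpos_of_nonneg_of_nonpos (sub_nonneg.2 (hf h1.le)) (by linarith)
  · rw [slope_def_field]
    exact div_nonpos_of_nonpos_of_nonneg (sub_nonpos.2 (hf h1.le)) (by linarith)

def itInt14 (b : ℝ) (f : ℝ → ℝ) : ℕ → ℝ → ℝ
  | 0 => f
  | (j+1) => fun x => ∫ t in b..x, itInt14 b f j t

lemma itInt14_contDiff (b : ℝ) (f : ℝ → ℝ) (hf : ContDiff ℝ ∞ f) :
    ∀ j, ContDiff ℝ ∞ (itInt14 b f j) := by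
  intro j
  induction j with
  | zero => exact hf
  | succ j ih =>
    have hd : ∀ x, HasDerivAt (itInt14 b f (j+1)) (itInt14 b f j x) x := fun x =>
      (ih.continuous.integral_hasStrictDerivAt b x).hasDerivAt
    rw [show itInt14 b f (j+1) = fun x => ∫ t in b..x, itInt14 b f j t from rfl] at hd ⊢
    rw [contDiff_infty_iff_deriv]
    refine ⟨fun x => (hd x).differentiableAt, ?_⟩
    have : deriv (fun x => ∫ t in b..x, itInt14 b f j t) = itInt14 b f j :=
      funext fun x => (hd x).deriv
    rw [this]; exact ih

lemma itInt14_hasDerivAt (b : ℝ) (f : ℝ → ℝ) (hf : ContDiff ℝ ∞ f) (j : ℕ) (x : ℝ) :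
    HasDerivAt (itInt14 b f (j+1)) (itInt14 b f j x) x :=
  (((itInt14_contDiff b f hf j).continuous.integral_hasStrictDerivAt b x).hasDerivAt)

lemma itInt14_deriv (b : ℝ) (f : ℝ → ℝ) (hf : ContDiff ℝ ∞ f) (j : ℕ) :
    deriv (itInt14 b f (j+1)) = itInt14 b f j :=
  funext fun x => (itInt14_hasDerivAt b f hf j x).deriv

lemma itInt14_iteratedDeriv (b : ℝ) (f : ℝ → ℝ) (hf : ContDiff ℝ ∞ f) :
    ∀ k m, k ≤ m → iteratedDeriv k (itInt14 b f m) = itInt14 b f (m - k) := by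
  intro k
  induction k with
  | zero => intro m _; simp [iteratedDeriv_zero]
  | succ k ih =>
    intro m hkm
    have hm : m - k = (m - (k+1)) + 1 := by omega
    rw [iteratedDeriv_succ, ih m (by omega), hm, itInt14_deriv b f hf]

lemma itInt14_sign (a b : ℝ) (f : ℝ → ℝ)
    (h0 : ∀ x ∈ Icc a b, 0 ≤ f x) :
    ∀ j, ∀ x ∈ Icc a b, 0 ≤ (-1:ℝ)^j * itInt14 b f j x := by
  intro j
  induction j with
  | zero => intro x hx; simpa [itInt14] using h0 x hx
  | succ j ih =>
    intro x hx
    have h1 : itInt14 b f (j+1) x = -∫ t in x..b, itInt14 b f j t := by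
      rw [show itInt14 b f (j+1) x = ∫ t in b..x, itInt14 b f j t from rfl,
        intervalIntegral.integral_symm]
    rw [h1, pow_succ]
    have h2 : (-1:ℝ)^j * ∫ t in x..b, itInt14 b f j t
        = ∫ t in x..b, (-1:ℝ)^j * itInt14 b f j t := by
      rw [intervalIntegral.integral_const_mul]
    calc (0:ℝ) ≤ ∫ t in x..b, (-1:ℝ)^j * itInt14 b f j t :=
          intervalIntegral.integral_nonneg hx.2
            (fun t ht => ih t ⟨le_trans hx.1 ht.1, ht.2⟩)
      _ = (-1:ℝ)^j * ∫ t in x..b, itInt14 b f j t := h2.symm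
      _ = (-1:ℝ)^j * -1 * -(∫ t in x..b, itInt14 b f j t) := by ring

lemma itInt14_const_mul (b : ℝ) (f : ℝ → ℝ) (r : ℝ) :
    ∀ j, itInt14 b (fun x => r * f x) j = fun x => r * itInt14 b f j x := by
  intro j
  induction j with
  | zero => rfl
  | succ j ih =>
    funext x
    show (∫ t in b..x, itInt14 b (fun x => r * f x) j t) = r * ∫ t in b..x, itInt14 b f j t
    rw [ih, intervalIntegral.integral_const_mul]

lemma itInt14_err (a b : ℝ) (hab : a ≤ b) (f : ℝ → ℝ) (hf : ContDiff ℝ ∞ f)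
    (p : ℕ → ℝ → ℝ) (hp : ∀ j, Continuous (p j))
    (hrec : ∀ j x, p (j+1) x = ∫ t in b..x, p j t)
    (E : ℝ) (hbase : ∀ x ∈ Icc a b, |f x - p 0 x| ≤ E) :
    ∀ j, ∀ x ∈ Icc a b, |itInt14 b f j x - p j x| ≤ E * (b-a)^j := by
  intro j
  induction j with
  | zero => intro x hx; simpa [itInt14] using hbase x hx
  | succ j ih =>
    intro x hx
    have hEj : 0 ≤ E * (b-a)^j :=
      le_trans (abs_nonneg _) (ih a ⟨le_rfl, hab⟩)
    have heq : itInt14 b f (j+1) x - p (j+1) x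
        = ∫ t in b..x, (itInt14 b f j t - p j t) := by
      rw [show itInt14 b f (j+1) x = ∫ t in b..x, itInt14 b f j t from rfl, hrec,
        intervalIntegral.integral_sub
          ((itInt14_contDiff b f hf j).continuous.intervalIntegrable _ _)
          ((hp j).intervalIntegrable _ _)]
    rw [heq]
    have hsub : Set.uIoc b x ⊆ Icc a b := by
      refine Set.Subset.trans Set.uIoc_subset_uIcc ?_
      rw [Set.uIcc_of_ge hx.2]
      exact Set.Icc_subset_Icc hx.1 le_rfl
    have hb1 : |∫ t in b..x, (itInt14 b f j t - p j t)| ≤ (E * (b-a)^j) * |x - b| := by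
      rw [← Real.norm_eq_abs]
      apply intervalIntegral.norm_integral_le_of_norm_le_const
      intro t ht
      rw [Real.norm_eq_abs]
      exact ih t (hsub ht)
    refine le_trans hb1 ?_
    have h3 : |x - b| ≤ b - a := by
      rw [abs_sub_comm, abs_of_nonneg (by linarith [hx.2])]
      linarith [hx.1]
    calc (E * (b-a)^j) * |x - b| ≤ (E * (b-a)^j) * (b-a) :=
          mul_le_mul_of_nonneg_left h3 hEj
      _ = E * (b-a)^(j+1) := by ring

lemma hasDerivAt_maxpow14 (c x : ℝ) (m : ℕ) (hm : 1 ≤ m) :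
    HasDerivAt (fun y => max (c - y) 0 ^ (m+1))
      (-((m+1 : ℕ) : ℝ) * max (c - x) 0 ^ m) x := by
  rcases lt_trichotomy x c with hx | hx | hx
  · have he : (fun y => max (c - y) 0 ^ (m+1)) =ᶠ[𝓝 x] fun y => (c - y)^(m+1) := by
      filter_upwards [Iio_mem_nhds hx] with y hy
      rw [max_eq_left (by simp only [Set.mem_Iio] at hy; linarith : (0:ℝ) ≤ c - y)]
    have h1 : HasDerivAt (fun y => (c - y)^(m+1))
        (((m+1:ℕ):ℝ) * (c - x)^(m+1-1) * (-1)) x :=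
      (((hasDerivAt_id x).const_sub c).pow (m+1))
    have h2 := h1.congr_of_eventuallyEq he
    refine h2.congr_deriv ?_
    rw [max_eq_left (by linarith : (0:ℝ) ≤ c - x)]
    simp only [Nat.add_sub_cancel]
    ring
  · subst hx
    have h0 : max (x - x) 0 = (0:ℝ) := by simp
    have hrhs : -((m+1 : ℕ) : ℝ) * max (x - x) 0 ^ m = 0 := by
      rw [h0, zero_pow (by omega : m ≠ 0), mul_zero]
    rw [hrhs, hasDerivAt_iff_isLittleO]
    rw [Asymptotics.isLittleO_iff]
    intro C hC
    have hev : ∀ᶠ y in 𝓝 x, |y - x| < min 1 C := by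
      filter_upwards [Metric.ball_mem_nhds x (lt_min one_pos hC)] with y hy
      simpa [Real.dist_eq] using hy
    filter_upwards [hev] with y hy
    have h1 : (0:ℝ) ≤ max (x - y) 0 := le_max_right _ _
    have h2 : max (x - y) 0 ≤ |y - x| := by
      rw [abs_sub_comm]
      exact max_le (le_abs_self _) (abs_nonneg _)
    have hb : ‖max (x - y) 0 ^ (m+1) - max (x - x) 0 ^ (m+1) - (y - x) • (0:ℝ)‖
        = max (x - y) 0 ^ (m+1) := by
      rw [h0, zero_pow (by omega : m + 1 ≠ 0), smul_zero, sub_zero, sub_zero,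
        Real.norm_eq_abs, abs_of_nonneg (pow_nonneg h1 _)]
    rw [hb, Real.norm_eq_abs]
    calc max (x - y) 0 ^ (m+1) ≤ |y - x| ^ (m+1) := pow_le_pow_left₀ h1 h2 _
      _ = |y - x| ^ m * |y - x| := by rw [pow_succ]
      _ ≤ C * |y - x| := by
          refine mul_le_mul_of_nonneg_right ?_ (abs_nonneg _)
          calc |y - x| ^ m ≤ |y - x| ^ 1 :=
                pow_le_pow_of_le_one (abs_nonneg _)
                  (le_of_lt (lt_of_lt_of_le hy (min_le_left _ _))) hm
            _ = |y - x| := pow_one _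
            _ ≤ C := le_of_lt (lt_of_lt_of_le hy (min_le_right _ _))
  · have he : (fun y => max (c - y) 0 ^ (m+1)) =ᶠ[𝓝 x] fun _ => (0:ℝ) := by
      filter_upwards [Ioi_mem_nhds hx] with y hy
      simp only [Set.mem_Ioi] at hy
      rw [max_eq_right (by linarith : c - y ≤ 0), zero_pow (by omega : m + 1 ≠ 0)]
    have h2 := (hasDerivAt_const x (0:ℝ)).congr_of_eventuallyEq he
    refine h2.congr_deriv ?_
    rw [max_eq_right (by linarith : c - x ≤ 0), zero_pow (by omega : m ≠ 0), mul_zero]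

lemma ae_mem_Icc14 {a b : ℝ} (μ : Measure ℝ) [IsProbabilityMeasure μ]
    (hμ : μ (Set.Icc a b) = 1) : ∀ᵐ x ∂μ, x ∈ Set.Icc a b := by
  rw [ae_iff]
  have h1 : μ (Set.Icc a b)ᶜ = 0 := by
    rw [measure_compl measurableSet_Icc (measure_ne_top μ _), hμ, measure_univ, tsub_self]
  exact h1

lemma integrable_of_cont14 {a b : ℝ} (μ : Measure ℝ) [IsProbabilityMeasure μ]
    (f : ℝ → ℝ) (hf : Continuous f) (hae : ∀ᵐ x ∂μ, x ∈ Set.Icc a b) :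
    Integrable f μ := by
  obtain ⟨C, hC⟩ := (isCompact_Icc (a := a) (b := b)).exists_bound_of_continuousOn
    hf.continuousOn
  exact (integrable_const C).mono' hf.aestronglyMeasurable (hae.mono fun x hx => hC x hx)

end Aux14

set_option maxHeartbeats 2000000 in
theorem stmt_14 (n : ℕ) (a b : ℝ) (hn : 1 ≤ n) (hab : a < b)
    (μ ν : Measure ℝ) [IsProbabilityMeasure μ] [IsProbabilityMeasure ν]
    (hμ : μ (Set.Icc a b) = 1) (hν : ν (Set.Icc a b) = 1)
    (hgen : ∀ u : ℝ → ℝ, ContDiff ℝ (n + 1) u →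
      (∀ k, 1 ≤ k → k ≤ n + 1 → ∀ x ∈ Set.Icc a b,
        (-1 : ℝ) ^ k * iteratedDeriv k u x ≤ 0) →
      (∀ k, 1 ≤ k → k ≤ n - 1 → iteratedDeriv k u b = 0) →
      (∫ x, u x ∂μ) ≤ ∫ x, u x ∂ν) :
    ∀ c ∈ Set.Icc a b,
      (∫ x, max (c - x) 0 ^ n ∂ν) ≤ ∫ x, max (c - x) 0 ^ n ∂μ := by
  obtain ⟨m, rfl⟩ : ∃ m, n = m + 1 := ⟨n - 1, by omega⟩
  simp only [Nat.add_sub_cancel] at hgen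
  intro c hc
  obtain ⟨hac, hcb⟩ := hc
  have hab' : a ≤ b := hab.le
  have haeμ : ∀ᵐ x ∂μ, x ∈ Set.Icc a b := ae_mem_Icc14 μ hμ
  have haeν : ∀ᵐ x ∂ν, x ∈ Set.Icc a b := ae_mem_Icc14 ν hν
  have hM_cont : Continuous (fun x : ℝ => max (c - x) 0 ^ (m+1)) :=
    ((continuous_const.sub continuous_id).max continuous_const).pow _
  have hintMμ : Integrable (fun x => max (c - x) 0 ^ (m+1)) μ :=
    integrable_of_cont14 μ _ hM_cont haeμ
  have hintMν : Integrable (fun x => max (c - x) 0 ^ (m+1)) ν :=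
    integrable_of_cont14 ν _ hM_cont haeν
  refine le_of_forall_pos_le_add ?_
  intro ε hε
  -- constants
  set C : ℝ := ((m+1).factorial : ℝ) * (b - a)^m with hCdef
  have hfacpos : (0:ℝ) < ((m+1).factorial : ℝ) := by exact_mod_cast Nat.factorial_pos (m+1)
  have hCpos : 0 < C := mul_pos hfacpos (pow_pos (by linarith) m)
  set ε₀ : ℝ := ε / (2 * C) with hε₀def
  have hε₀ : 0 < ε₀ := div_pos hε (by linarith)
  -- the mollified kernel
  set q : ℝ → ℝ := fun t => Real.smoothTransition ((c - t) / ε₀) with hqdef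
  have hq_cd : ContDiff ℝ ∞ q :=
    Real.smoothTransition.contDiff.comp ((contDiff_const.sub contDiff_id).div_const ε₀)
  have hq0 : ∀ t, 0 ≤ q t := fun t => Real.smoothTransition.nonneg _
  have hq1 : ∀ t, q t ≤ 1 := fun t => Real.smoothTransition.le_one _
  have hq_eq0 : ∀ t, c ≤ t → q t = 0 := fun t ht =>
    Real.smoothTransition.zero_of_nonpos (div_nonpos_of_nonpos_of_nonneg (by linarith) hε₀.le)
  have hq_eq1 : ∀ t, t ≤ c - ε₀ → q t = 1 := fun t ht =>
    Real.smoothTransition.one_of_one_le ((one_le_div hε₀).2 (by linarith))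
  have hq_anti : Antitone q := by
    intro t₁ t₂ h12
    refine smoothTransition_mono14 ?_
    have h' : c - t₂ ≤ c - t₁ := by linarith
    gcongr
  have hq'_le : ∀ x, deriv q x ≤ 0 := fun x =>
    deriv_nonpos_of_antitone14 hq_anti
      ((hq_cd.differentiable (by simp)).differentiableAt)
  -- the once-integrated kernel w
  set w : ℝ → ℝ := fun x => ∫ t in x..b, q t with hwdef
  have hw_symm : w = fun y => -(∫ t in b..y, q t) := by
    funext y
    show (∫ t in y..b, q t) = -(∫ t in b..y, q t)
    exact intervalIntegral.integral_symm b y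
  have hw_deriv : ∀ x, HasDerivAt w (-(q x)) x := by
    intro x
    rw [hw_symm]
    exact ((hq_cd.continuous.integral_hasStrictDerivAt b x).hasDerivAt).neg
  have hw_cd : ContDiff ℝ ∞ w := by
    rw [contDiff_infty_iff_deriv]
    refine ⟨fun x => (hw_deriv x).differentiableAt, ?_⟩
    have : deriv w = fun x => -(q x) := funext fun x => (hw_deriv x).deriv
    rw [this]; exact hq_cd.neg
  have hw_nonneg : ∀ x ∈ Set.Icc a b, 0 ≤ w x := by
    intro x hx
    exact intervalIntegral.integral_nonneg hx.2 (fun t _ => hq0 t)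
  -- error of w vs max
  have hwerr : ∀ x ∈ Set.Icc a b, |w x - max (c - x) 0| ≤ ε₀ := by
    intro x hx
    have hqint : ∀ y z : ℝ, IntervalIntegrable q volume y z :=
      fun y z => hq_cd.continuous.intervalIntegrable y z
    have hupper : w x ≤ max (c - x) 0 := by
      rcases le_or_gt x c with hxc | hxc
      · have hsplit : (∫ t in x..c, q t) + (∫ t in c..b, q t) = w x :=
          intervalIntegral.integral_add_adjacent_intervals (hqint x c) (hqint c b)
        have hcb0 : (∫ t in c..b, q t) = 0 := by
          rw [intervalIntegral.integral_congr (g := fun _ => (0:ℝ))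
            (fun t ht => by
              rw [Set.uIcc_of_le hcb] at ht
              exact hq_eq0 t ht.1)]
          simp
        have hle : (∫ t in x..c, q t) ≤ ∫ t in x..c, (1:ℝ) :=
          intervalIntegral.integral_mono_on hxc (hqint x c)
            (intervalIntegrable_const) (fun t _ => hq1 t)
        have h1 : (∫ t in x..c, (1:ℝ)) = c - x := by simp
        rw [max_eq_left (by linarith)]
        linarith
      · have : w x = 0 := by
          show (∫ t in x..b, q t) = 0
          rw [intervalIntegral.integral_congr (g := fun _ => (0:ℝ))
            (fun t ht => by
              rw [Set.uIcc_of_le hx.2] at ht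
              exact hq_eq0 t (by linarith [ht.1]))]
          simp
        rw [this]
        exact le_max_right _ _
    have hlower : max (c - x) 0 - ε₀ ≤ w x := by
      rcases le_or_gt x (c - ε₀) with hxc | hxc
      · have hsplit : (∫ t in x..(c-ε₀), q t) + (∫ t in (c-ε₀)..b, q t) = w x :=
          intervalIntegral.integral_add_adjacent_intervals (hqint _ _) (hqint _ _)
        have h1 : (∫ t in x..(c-ε₀), q t) = c - ε₀ - x := by
          rw [intervalIntegral.integral_congr (g := fun _ => (1:ℝ))
            (fun t ht => by
              rw [Set.uIcc_of_le hxc] at ht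
              exact hq_eq1 t ht.2)]
          simp
        have h2 : 0 ≤ ∫ t in (c-ε₀)..b, q t :=
          intervalIntegral.integral_nonneg (by linarith) (fun t _ => hq0 t)
        have h3 : max (c - x) 0 = c - x := max_eq_left (by linarith)
        rw [h3]
        linarith
      · have h2 : 0 ≤ w x := hw_nonneg x hx
        have h3 : max (c - x) 0 ≤ ε₀ := by
          rcases le_or_gt (c - x) 0 with h | h
          · rw [max_eq_right h]; exact hε₀.le
          · rw [max_eq_left h.le]; linarith
        linarith
    rw [abs_le]
    constructor <;> [linarith; linarith]
  -- the approximating generator function u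
  set s : ℝ := (-1)^(m+1) * ((m+1).factorial : ℝ) with hsdef
  set f₀ : ℝ → ℝ := fun x => s * w x with hf₀def
  have hf₀_cd : ContDiff ℝ ∞ f₀ := contDiff_const.mul hw_cd
  set u : ℝ → ℝ := itInt14 b f₀ m with hudef
  have hu_cdInf : ContDiff ℝ ∞ u := itInt14_contDiff b f₀ hf₀_cd m
  have hu_cont : Continuous u := hu_cdInf.continuous
  -- target comparison functions p j
  set p : ℕ → ℝ → ℝ := fun j x =>
    (-1:ℝ)^(m+1+j) * (((m+1).factorial : ℝ) / ((j+1).factorial : ℝ)) * max (c - x) 0 ^ (j+1) with hpdef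
  have hp_cont : ∀ j, Continuous (p j) := fun j =>
    continuous_const.mul (((continuous_const.sub continuous_id).max continuous_const).pow _)
  have hp_rec : ∀ j x, p (j+1) x = ∫ t in b..x, p j t := by
    intro j x
    have hd : ∀ t : ℝ, HasDerivAt (p (j+1)) (p j t) t := by
      intro t
      have h := (hasDerivAt_maxpow14 c t (j+1) (by omega)).const_mul
        ((-1:ℝ)^(m+1+(j+1)) * (((m+1).factorial : ℝ) / ((j+2).factorial : ℝ)))
      refine h.congr_deriv ?_
      symm
      have h1 : ((j+1).factorial : ℝ) ≠ 0 := by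
        exact_mod_cast (Nat.factorial_pos (j+1)).ne'
      have h2 : ((j+2).factorial : ℝ) ≠ 0 := by
        exact_mod_cast (Nat.factorial_pos (j+2)).ne'
      have hfac : ((j+2).factorial : ℝ) = ((j:ℝ)+2) * ((j+1).factorial : ℝ) := by
        have := Nat.factorial_succ (j+1)
        push_cast [this]
        ring
      show p j t = _
      rw [hpdef]
      simp only []
      rw [show (m+1+(j+1)) = (m+1+j)+1 from rfl, pow_succ]
      rw [hfac]
      push_cast
      field_simp
      ring
    have hint : IntervalIntegrable (p j) volume b x := (hp_cont j).intervalIntegrable _ _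
    have heval := intervalIntegral.integral_eq_sub_of_hasDerivAt (fun t _ => hd t) hint
    have hb0 : p (j+1) b = 0 := by
      rw [hpdef]
      simp only []
      rw [max_eq_right (by linarith : c - b ≤ 0), zero_pow (by omega : j+1+1 ≠ 0), mul_zero]
    rw [heval, hb0, sub_zero]
  -- base error
  have habs_s : |s| = ((m+1).factorial : ℝ) := by
    rw [hsdef, abs_mul, abs_pow, abs_neg, abs_one, one_pow, one_mul,
      abs_of_nonneg hfacpos.le]
  have hbase : ∀ x ∈ Set.Icc a b, |f₀ x - p 0 x| ≤ ((m+1).factorial : ℝ) * ε₀ := by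
    intro x hx
    have hp0 : p 0 x = s * max (c - x) 0 := by
      rw [hpdef, hsdef]
      simp [Nat.factorial]
    rw [hf₀def]
    simp only []
    rw [hp0, ← mul_sub, abs_mul, habs_s]
    exact mul_le_mul_of_nonneg_left (hwerr x hx) hfacpos.le
  have herr := itInt14_err a b hab' f₀ hf₀_cd p hp_cont hp_rec
    (((m+1).factorial : ℝ) * ε₀) hbase m
  -- p m is -max^n
  have hpn : ∀ x, p m x = -(max (c - x) 0 ^ (m+1)) := by
    intro x
    rw [hpdef]
    simp only []
    rw [div_self (by exact_mod_cast (Nat.factorial_pos (m+1)).ne' : ((m+1).factorial : ℝ) ≠ 0)]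
    have h2 : (-1:ℝ)^(m+1+m) = -1 := Odd.neg_one_pow ⟨m, by omega⟩
    rw [h2]
    ring
  -- final error bound constant
  have hCε : ((m+1).factorial : ℝ) * ε₀ * (b - a)^m = ε / 2 := by
    rw [hε₀def, hCdef]
    have hba : b - a ≠ 0 := (sub_pos.2 hab).ne'
    field_simp
  have herr' : ∀ x ∈ Set.Icc a b, |u x + max (c - x) 0 ^ (m+1)| ≤ ε / 2 := by
    intro x hx
    have h := herr x hx
    rw [hpn x, sub_neg_eq_add, hCε] at h
    exact h
  -- verify hypotheses of hgen
  have hsq : (-1:ℝ)^(m+1) * (-1)^(m+1) = 1 := by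
    rw [← pow_add]
    exact Even.neg_one_pow ⟨m+1, rfl⟩
  have hIDlow : ∀ k ≤ m, iteratedDeriv k u = itInt14 b f₀ (m - k) := fun k hk => by
    rw [hudef]; exact itInt14_iteratedDeriv b f₀ hf₀_cd k m hk
  have hIDm : iteratedDeriv m u = f₀ := by
    have := hIDlow m le_rfl
    rwa [Nat.sub_self] at this
  have hf₀_deriv : ∀ x, HasDerivAt f₀ (s * -(q x)) x := fun x =>
    (hw_deriv x).const_mul s
  have hIDm1 : iteratedDeriv (m+1) u = fun x => s * -(q x) := by
    rw [iteratedDeriv_succ, hIDm]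
    exact funext fun x => (hf₀_deriv x).deriv
  have hIDm2 : iteratedDeriv (m+2) u = fun x => s * -(deriv q x) := by
    rw [iteratedDeriv_succ, hIDm1]
    refine funext fun x => ?_
    have hq_diff : HasDerivAt q (deriv q x) x :=
      ((hq_cd.differentiable (by simp)) x).hasDerivAt
    exact (hq_diff.neg.const_mul s).deriv
  have hsign : ∀ k, 1 ≤ k → k ≤ (m+1) + 1 → ∀ x ∈ Set.Icc a b,
      (-1:ℝ)^k * iteratedDeriv k u x ≤ 0 := by
    intro k hk1 hk2 x hx
    rcases (by omega : k ≤ m ∨ k = m + 1 ∨ k = m + 2) with hk | hk | hk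
    · rw [hIDlow k hk, hf₀def, itInt14_const_mul b w s (m - k)]
      simp only []
      have hWs := itInt14_sign a b w hw_nonneg (m - k) x hx
      set W := itInt14 b w (m - k) x with hW
      have hpow : (-1:ℝ)^k * (-1:ℝ)^(m+1) = -(-1:ℝ)^(m-k) := by
        have hmk : m + 1 = (m - k) + k + 1 := by omega
        rw [hmk, pow_add, pow_add, pow_one]
        have hsq' : (-1:ℝ)^k * (-1)^k = 1 := by
          rw [← pow_add]; exact Even.neg_one_pow ⟨k, rfl⟩
        linear_combination (-(-1:ℝ)^(m-k)) * hsq'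
      have hkey : (-1:ℝ)^k * (s * W) = -(((m+1).factorial : ℝ) * ((-1:ℝ)^(m-k) * W)) := by
        rw [hsdef]
        linear_combination (W * ((m+1).factorial : ℝ)) * hpow
      rw [hkey]
      exact neg_nonpos.2 (mul_nonneg hfacpos.le hWs)
    · subst hk
      rw [hIDm1]
      show (-1:ℝ)^(m+1) * (s * -(q x)) ≤ 0
      have hkey : (-1:ℝ)^(m+1) * (s * -(q x))
          = -(((m+1).factorial : ℝ) * q x) := by
        rw [hsdef]
        linear_combination (-((((m+1).factorial : ℝ)) * q x)) * hsq
      rw [hkey]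
      exact neg_nonpos.2 (mul_nonneg hfacpos.le (hq0 x))
    · subst hk
      rw [hIDm2]
      show (-1:ℝ)^(m+2) * (s * -(deriv q x)) ≤ 0
      have h1 : (-1:ℝ)^(m+2) = (-1:ℝ)^(m+1) * (-1) := by rw [pow_succ]
      have hkey : (-1:ℝ)^(m+2) * (s * -(deriv q x))
          = ((m+1).factorial : ℝ) * deriv q x := by
        rw [hsdef, h1]
        linear_combination ((((m+1).factorial : ℝ)) * deriv q x) * hsq
      rw [hkey]
      exact mul_nonpos_of_nonneg_of_nonpos hfacpos.le (hq'_le x)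
  have hbdry : ∀ k, 1 ≤ k → k ≤ m → iteratedDeriv k u b = 0 := by
    intro k hk1 hk2
    rw [hIDlow k hk2]
    rcases Nat.eq_zero_or_pos (m - k) with h | h
    · rw [h]
      show f₀ b = 0
      rw [hf₀def]
      simp only []
      rw [hwdef]
      simp [intervalIntegral.integral_same]
    · obtain ⟨i, hi⟩ : ∃ i, m - k = i + 1 := ⟨m - k - 1, by omega⟩
      rw [hi]
      show (∫ t in b..b, itInt14 b f₀ i t) = 0
      exact intervalIntegral.integral_same
  have hu_cdn : ContDiff ℝ ((m+1 : ℕ) + 1) u := hu_cdInf.of_le (by exact_mod_cast le_top)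
  have hmain := hgen u hu_cdn hsign hbdry
  -- integrability
  have hintuμ : Integrable u μ := integrable_of_cont14 μ u hu_cont haeμ
  have hintuν : Integrable u ν := integrable_of_cont14 ν u hu_cont haeν
  -- integral error bounds
  have hbndμ : |(∫ x, u x ∂μ) + ∫ x, max (c - x) 0 ^ (m+1) ∂μ| ≤ ε / 2 := by
    rw [← integral_add hintuμ hintMμ, ← Real.norm_eq_abs]
    calc ‖∫ x, (u x + max (c - x) 0 ^ (m+1)) ∂μ‖
        ≤ ∫ _, ε / 2 ∂μ := norm_integral_le_of_norm_le (integrable_const _)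
          (haeμ.mono fun x hx => by rw [Real.norm_eq_abs]; exact herr' x hx)
      _ = ε / 2 := by simp
  have hbndν : |(∫ x, u x ∂ν) + ∫ x, max (c - x) 0 ^ (m+1) ∂ν| ≤ ε / 2 := by
    rw [← integral_add hintuν hintMν, ← Real.norm_eq_abs]
    calc ‖∫ x, (u x + max (c - x) 0 ^ (m+1)) ∂ν‖
        ≤ ∫ _, ε / 2 ∂ν := norm_integral_le_of_norm_le (integrable_const _)
          (haeν.mono fun x hx => by rw [Real.norm_eq_abs]; exact herr' x hx)
      _ = ε / 2 := by simp
  rw [abs_le] at hbndμ hbndν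
  have h1 := hbndμ.1
  have h2 := hbndν.2
  linarith [hmain, hbndμ.1, hbndμ.2, hbndν.1, hbndν.2]
end
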